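/- arXiv:2306.14615 — 6 statements merged into one kernel-verified Lean document; each statement's English description precedes it below -/
import Mathlib

section
/- For fixed δ > 0 and Ψ > 0, the infimum over γ ∈ (0,δ) of 1/δ + δ(1+γΨ)/(γ(δ−γ)) equals 1/δ + δΨ²√(1+δΨ) / (δΨ(√(1+δΨ)−2) + 2(√(1+δΨ)−1)); for Ψ = 0 this infimum equals 5/δ. -/
/-- For fixed `δ > 0` and `Ψ > 0`, the infimum over `γ ∈ (0,δ)` of
`1/δ + δ(1+γΨ)/(γ(δ-γ))` equals
`1/δ + δΨ²√(1+δΨ)/(δΨ(√(1+δΨ)-2) + 2(√(1+δΨ)-1))`;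
for `Ψ = 0` this infimum equals `5/δ`. -/
theorem inf_of_reflected_constant_g (δ Ψ : ℝ) (hδ : 0 < δ) (hΨ : 0 ≤ Ψ) :
    (0 < Ψ →
      sInf ((fun γ : ℝ => 1 / δ + δ * (1 + γ * Ψ) / (γ * (δ - γ))) '' Set.Ioo 0 δ) =
        1 / δ + δ * Ψ ^ 2 * Real.sqrt (1 + δ * Ψ) /
          (δ * Ψ * (Real.sqrt (1 + δ * Ψ) - 2) + 2 * (Real.sqrt (1 + δ * Ψ) - 1))) ∧
    (Ψ = 0 →
      sInf ((fun γ : ℝ => 1 / δ + δ * (1 + γ * Ψ) / (γ * (δ - γ))) '' Set.Ioo 0 δ) =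
        5 / δ) := by
  constructor
  · intro hΨpos
    set s := Real.sqrt (1 + δ * Ψ) with hs
    have hs2 : s ^ 2 = 1 + δ * Ψ := Real.sq_sqrt (by positivity)
    have hs1 : 1 < s := by
      nlinarith [Real.sqrt_nonneg (1 + δ * Ψ), mul_pos hδ hΨpos]
    have hspos : 0 < s := by linarith
    set γ0 : ℝ := (s - 1) / Ψ with hγ0
    have hγ0pos : 0 < γ0 := div_pos (by linarith) hΨpos
    have hγ0lt : γ0 < δ := by
      rw [div_lt_iff₀ hΨpos]; nlinarith
    have hden : δ * Ψ * (s - 2) + 2 * (s - 1) = s * (s - 1) ^ 2 := by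
      linear_combination (2 - s) * hs2
    have hs1sq : (0:ℝ) < (s - 1) ^ 2 := pow_pos (by linarith) 2
    have hdenpos : (0:ℝ) < s * (s - 1) ^ 2 := mul_pos hspos hs1sq
    have hRHS : 1 / δ + δ * Ψ ^ 2 * s / (δ * Ψ * (s - 2) + 2 * (s - 1)) =
        1 / δ + δ * Ψ ^ 2 / (s - 1) ^ 2 := by
      rw [hden]
      congr 1
      rw [div_eq_div_iff hdenpos.ne' hs1sq.ne']
      ring
    have hA : 1 / δ + δ * (1 + γ0 * Ψ) / (γ0 * (δ - γ0)) =
        1 / δ + δ * Ψ ^ 2 / (s - 1) ^ 2 := by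
      have hprod : (0:ℝ) < γ0 * (δ - γ0) := mul_pos hγ0pos (by linarith)
      congr 1
      rw [div_eq_div_iff hprod.ne' hs1sq.ne', hγ0]
      field_simp
      linear_combination (s - 1) * hs2
    refine IsLeast.csInf_eq ⟨⟨γ0, ⟨hγ0pos, hγ0lt⟩, hA.trans hRHS.symm⟩, ?_⟩
    rintro x ⟨γ, ⟨hγ1, hγ2⟩, rfl⟩
    rw [hRHS]
    have hprod : (0:ℝ) < γ * (δ - γ) := mul_pos hγ1 (by linarith)
    have key : δ * Ψ ^ 2 / (s - 1) ^ 2 ≤ δ * (1 + γ * Ψ) / (γ * (δ - γ)) := by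
      rw [div_le_div_iff₀ hs1sq hprod]
      have hid : δ * (1 + γ * Ψ) * (s - 1) ^ 2 - δ * Ψ ^ 2 * (γ * (δ - γ)) =
          δ * (s - 1 - γ * Ψ) ^ 2 := by
        linear_combination (γ * Ψ * δ) * hs2
      nlinarith [mul_nonneg hδ.le (sq_nonneg (s - 1 - γ * Ψ))]
    linarith
  · intro hΨ0
    subst hΨ0
    refine IsLeast.csInf_eq ⟨⟨δ / 2, ⟨by linarith, by linarith⟩, ?_⟩, ?_⟩
    · show 1 / δ + δ * (1 + δ / 2 * 0) / (δ / 2 * (δ - δ / 2)) = 5 / δ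
      rw [div_add_div _ _ hδ.ne' (by nlinarith : (δ / 2 * (δ - δ / 2)) ≠ 0),
        div_eq_div_iff (by nlinarith [pow_pos hδ 3] : (δ * (δ / 2 * (δ - δ / 2))) ≠ 0) hδ.ne']
      ring
    · rintro x ⟨γ, ⟨hγ1, hγ2⟩, rfl⟩
      simp only [mul_zero, add_zero, mul_one]
      have hprod : (0:ℝ) < γ * (δ - γ) := mul_pos hγ1 (by linarith)
      have key : (4:ℝ) / δ ≤ δ / (γ * (δ - γ)) := by
        rw [div_le_div_iff₀ hδ hprod]
        nlinarith [sq_nonneg (δ - 2 * γ)]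
      have h5 : (5:ℝ) / δ = 1 / δ + 4 / δ := by ring
      rw [h5]
      linarith
end

section
/- The function x ↦ ((√(1+γx) − 1)·√(1+βx)) / (√(1+βx) − √(1+γx)) is non-decreasing on (0,∞), for fixed 0 < γ < β. -/
open Real Set

noncomputable def gfun (γ β : ℝ) (x : ℝ) : ℝ :=
  Real.sqrt (1 + β * x) * (Real.sqrt (1 + β * x) + Real.sqrt (1 + γ * x)) /
    (1 + Real.sqrt (1 + γ * x))

lemma gfun_hasDerivAt (γ β : ℝ) (hγ : 0 < γ) (hγβ : γ < β) (x : ℝ) (hx : 0 < x) :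
    HasDerivAt (gfun γ β)
      ((((1 / (2 * Real.sqrt (1 + β * x)) * β) * (Real.sqrt (1 + β * x) + Real.sqrt (1 + γ * x))
          + Real.sqrt (1 + β * x) * (1 / (2 * Real.sqrt (1 + β * x)) * β
            + 1 / (2 * Real.sqrt (1 + γ * x)) * γ)) * (1 + Real.sqrt (1 + γ * x))
        - Real.sqrt (1 + β * x) * (Real.sqrt (1 + β * x) + Real.sqrt (1 + γ * x)) *
            (1 / (2 * Real.sqrt (1 + γ * x)) * γ))
        / (1 + Real.sqrt (1 + γ * x))^2) x := by
  have hβx : (0:ℝ) < 1 + β * x := by nlinarith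
  have hγx : (0:ℝ) < 1 + γ * x := by nlinarith
  have hA : HasDerivAt (fun x : ℝ => Real.sqrt (1 + β * x))
      (1 / (2 * Real.sqrt (1 + β * x)) * β) x := by
    have h1 : HasDerivAt (fun x : ℝ => 1 + β * x) β x := by
      simpa using ((hasDerivAt_id x).const_mul β).const_add 1
    exact (Real.hasDerivAt_sqrt hβx.ne').comp x h1
  have hB : HasDerivAt (fun x : ℝ => Real.sqrt (1 + γ * x))
      (1 / (2 * Real.sqrt (1 + γ * x)) * γ) x := by
    have h1 : HasDerivAt (fun x : ℝ => 1 + γ * x) γ x := by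
      simpa using ((hasDerivAt_id x).const_mul γ).const_add 1
    exact (Real.hasDerivAt_sqrt hγx.ne').comp x h1
  have hden : (1 + Real.sqrt (1 + γ * x)) ≠ 0 := by positivity
  have := (hA.mul (hA.add hB)).div (hB.const_add 1) hden
  exact this

lemma gfun_mono (γ β : ℝ) (hγ : 0 < γ) (hγβ : γ < β) :
    MonotoneOn (gfun γ β) (Set.Ioi 0) := by
  have hdiff : ∀ x ∈ interior (Set.Ioi (0:ℝ)), HasDerivAt (gfun γ β)
      ((((1 / (2 * Real.sqrt (1 + β * x)) * β) * (Real.sqrt (1 + β * x) + Real.sqrt (1 + γ * x))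
          + Real.sqrt (1 + β * x) * (1 / (2 * Real.sqrt (1 + β * x)) * β
            + 1 / (2 * Real.sqrt (1 + γ * x)) * γ)) * (1 + Real.sqrt (1 + γ * x))
        - Real.sqrt (1 + β * x) * (Real.sqrt (1 + β * x) + Real.sqrt (1 + γ * x)) *
            (1 / (2 * Real.sqrt (1 + γ * x)) * γ))
        / (1 + Real.sqrt (1 + γ * x))^2) x := by
    intro x hx
    rw [interior_Ioi] at hx
    exact gfun_hasDerivAt γ β hγ hγβ x hx
  apply monotoneOn_of_deriv_nonneg (convex_Ioi 0)
  · apply ContinuousOn.div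
    · exact ((Real.continuous_sqrt.comp (by continuity)).mul
        ((Real.continuous_sqrt.comp (by continuity)).add
          (Real.continuous_sqrt.comp (by continuity)))).continuousOn
    · exact (continuous_const.add (Real.continuous_sqrt.comp (by continuity))).continuousOn
    · intro x hx
      have : (0:ℝ) ≤ Real.sqrt (1 + γ * x) := Real.sqrt_nonneg _
      positivity
  · intro x hx
    exact (hdiff x hx).differentiableAt.differentiableWithinAt
  · intro x hx
    rw [(hdiff x hx).deriv]
    rw [interior_Ioi] at hx
    have hx0 : (0:ℝ) < x := hx
    have hβx : (0:ℝ) < 1 + β * x := by nlinarith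
    have hγx : (0:ℝ) < 1 + γ * x := by nlinarith
    set a := Real.sqrt (1 + β * x) with ha
    set b := Real.sqrt (1 + γ * x) with hb
    have ha2 : a ^ 2 = 1 + β * x := Real.sq_sqrt hβx.le
    have hb2 : b ^ 2 = 1 + γ * x := Real.sq_sqrt hγx.le
    have hapos : 0 < a := Real.sqrt_pos.mpr hβx
    have hbpos : 0 < b := Real.sqrt_pos.mpr hγx
    have hb1 : 1 ≤ b := by nlinarith [mul_pos hγ hx0]
    have hba : b ≤ a := by nlinarith [mul_pos (sub_pos.mpr hγβ) hx0]
    apply div_nonneg _ (by positivity)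
    have key : 0 ≤ (β * b * (a + b) + β * a * b + γ * a ^ 2) * (1 + b)
        - γ * a ^ 2 * (a + b) := by
      nlinarith [mul_pos hapos hbpos, mul_nonneg (mul_nonneg hγ.le (sq_nonneg a))
          (add_pos hapos hbpos).le,
        mul_nonneg (sub_nonneg.mpr (by nlinarith : γ * a ^ 2 ≤ β * b ^ 2))
          (add_pos hapos hbpos).le]
    have heq : (1 / (2 * a) * β * (a + b) + a * (1 / (2 * a) * β + 1 / (2 * b) * γ)) * (1 + b)
        - a * (a + b) * (1 / (2 * b) * γ)
        = ((β * b * (a + b) + β * a * b + γ * a ^ 2) * (1 + b)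
            - γ * a ^ 2 * (a + b)) / (2 * a * b) := by
      field_simp
      ring
    rw [heq]
    positivity

/-- For fixed `0 < γ < β`, the function
`x ↦ ((√(1+γx) − 1)·√(1+βx)) / (√(1+βx) − √(1+γx))` is non-decreasing on `(0,∞)`. -/
theorem monotoneOn_k (γ β : ℝ) (hγ : 0 < γ) (hγβ : γ < β) :
    MonotoneOn
      (fun x : ℝ =>
        (Real.sqrt (1 + γ * x) - 1) * Real.sqrt (1 + β * x) /
          (Real.sqrt (1 + β * x) - Real.sqrt (1 + γ * x)))
      (Set.Ioi 0) := by
  have keq : ∀ x ∈ Set.Ioi (0:ℝ),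
      (Real.sqrt (1 + γ * x) - 1) * Real.sqrt (1 + β * x) /
          (Real.sqrt (1 + β * x) - Real.sqrt (1 + γ * x))
        = γ / (β - γ) * gfun γ β x := by
    intro x hx
    rw [Set.mem_Ioi] at hx
    have hx0 : (0:ℝ) < x := hx
    have hβx : (0:ℝ) < 1 + β * x := by nlinarith
    have hγx : (0:ℝ) < 1 + γ * x := by nlinarith
    set a := Real.sqrt (1 + β * x) with ha
    set b := Real.sqrt (1 + γ * x) with hb
    have ha2 : a ^ 2 = 1 + β * x := Real.sq_sqrt hβx.le
    have hb2 : b ^ 2 = 1 + γ * x := Real.sq_sqrt hγx.le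
    have hapos : 0 < a := Real.sqrt_pos.mpr hβx
    have hbpos : 0 < b := Real.sqrt_pos.mpr hγx
    have hba : b < a := by
      nlinarith [mul_pos (sub_pos.mpr hγβ) hx0]
    have hb1pos : (0:ℝ) < 1 + b := by linarith
    show (b - 1) * a / (a - b) = γ / (β - γ) * (a * (a + b) / (1 + b))
    rw [div_mul_div_comm, div_eq_div_iff (sub_pos.mpr hba).ne' (mul_pos (sub_pos.mpr hγβ) hb1pos).ne']
    linear_combination (a * β) * hb2 - (a * γ) * ha2
  intro x hx y hy hxy
  simp only
  rw [keq x hx, keq y hy]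
  have hc : 0 ≤ γ / (β - γ) := by
    apply div_nonneg hγ.le; linarith
  exact mul_le_mul_of_nonneg_left (gfun_mono γ β hγ hγβ hx hy hxy) hc
end

section
/- Let A and B be right-continuous, non-decreasing functions starting at zero. Then E(A)^{−1}·E(B) = E(C), where C = B^c − A^c + Σ_{s≤·} (ΔB_s − ΔA_s)/(1+ΔA_s). -/
/-- The jump of a function `A` at a point `s`. -/
noncomputable def jumpOf (A : ℝ → ℝ) (s : ℝ) : ℝ :=
  A s - Function.leftLim A s

/-- The continuous part of `A` at time `t`: `A t` minus the sum of the jumps of `A`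
over `(0, t]`. -/
noncomputable def contPart (A : ℝ → ℝ) (t : ℝ) : ℝ :=
  A t - ∑' s : Set.Ioc (0 : ℝ) t, jumpOf A s

open Set Filter Topology Function

section aux

/-- Products of `1 + f i` with `f` summable nonnegative converge. -/
lemma hasProd_one_add {ι : Type*} {f : ι → ℝ} (hf : Summable f) (h0 : ∀ i, 0 ≤ f i) :
    ∃ a : ℝ, 1 ≤ a ∧ HasProd (fun i => 1 + f i) a := by
  set P : Finset ι → ℝ := fun s => ∏ i ∈ s, (1 + f i) with hP
  have h1 : ∀ s : Finset ι, 1 ≤ P s := by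
    intro s
    calc (1 : ℝ) = ∏ _i ∈ s, 1 := by simp
    _ ≤ P s := Finset.prod_le_prod (by intros; norm_num) (by intro i _; linarith [h0 i])
  classical
  have hmono : Monotone P := by
    intro s t hst
    have := Finset.prod_sdiff (f := fun i => 1 + f i) hst
    calc P s = 1 * P s := (one_mul _).symm
    _ ≤ P (t \ s) * P s := by
        apply mul_le_mul_of_nonneg_right (h1 _) (le_trans zero_le_one (h1 s))
    _ = P t := this
  have hbdd : BddAbove (Set.range P) := by
    refine ⟨Real.exp (∑' i, f i), ?_⟩
    rintro x ⟨s, rfl⟩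
    calc P s ≤ ∏ i ∈ s, Real.exp (f i) :=
          Finset.prod_le_prod (fun i _ => by linarith [h0 i])
            (fun i _ => by linarith [Real.add_one_le_exp (f i)])
    _ = Real.exp (∑ i ∈ s, f i) := (Real.exp_sum s f).symm
    _ ≤ Real.exp (∑' i, f i) := Real.exp_le_exp.2 (Summable.sum_le_tsum s (fun i _ => h0 i) hf)
  have hlub : IsLUB (Set.range P) (sSup (Set.range P)) :=
    isLUB_csSup (Set.range_nonempty P) hbdd
  refine ⟨sSup (Set.range P), ?_, tendsto_atTop_isLUB hmono hlub⟩
  exact le_trans (h1 ∅) (hlub.1 ⟨∅, rfl⟩)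

/-- Jumps of a monotone right-continuous function are nonnegative and summable on `Ioc 0 t`. -/
lemma jump_facts (A : ℝ → ℝ) (hA_mono : MonotoneOn A (Set.Ici 0))
    (hA_rc : ∀ t ∈ Set.Ici (0 : ℝ), ContinuousWithinAt A (Set.Ici t) t) (t : ℝ) :
    (∀ s ∈ Set.Ioc (0 : ℝ) t, 0 ≤ jumpOf A s) ∧
      Summable (fun s : Set.Ioc (0 : ℝ) t => jumpOf A ↑s) := by
  set A' : ℝ → ℝ := fun x => A (max x 0) with hA'
  have monoA' : Monotone A' := fun x y hxy =>
    hA_mono (Set.mem_Ici.2 (le_max_right _ _)) (Set.mem_Ici.2 (le_max_right _ _)) (max_le_max hxy le_rfl)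
  have rcA' : ∀ x, ContinuousWithinAt A' (Set.Ici x) x := by
    intro x
    have h1 : ContinuousWithinAt A (Set.Ici (max x 0)) (max x 0) := hA_rc _ (Set.mem_Ici.2 (le_max_right _ _))
    have h2 : ContinuousWithinAt (fun y : ℝ => max y 0) (Set.Ici x) x :=
      (continuous_id.max continuous_const).continuousWithinAt
    exact ContinuousWithinAt.comp (g := A) (f := fun y : ℝ => max y 0) h1 h2
      (fun y hy => Set.mem_Ici.2 (max_le_max (Set.mem_Ici.1 hy) le_rfl))
  set F : StieltjesFunction ℝ := ⟨A', monoA', rcA'⟩ with hF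
  have hjump : ∀ s ∈ Set.Ioc (0 : ℝ) t, jumpOf A s = A' s - leftLim A' s := by
    intro s hs
    have hsne : (𝓝[<] s : Filter ℝ) ≠ ⊥ := (nhdsLT_neBot s).ne'
    have hev : A' =ᶠ[𝓝[<] s] A := by
      filter_upwards [Ioo_mem_nhdsLT_of_mem (show s ∈ Set.Ioc (0:ℝ) s from ⟨hs.1, le_rfl⟩)]
        with x hx
      simp [hA', max_eq_left hx.1.le]
    have htd : Tendsto A (𝓝[<] s) (𝓝 (leftLim A' s)) :=
      (monoA'.tendsto_leftLim s).congr' hev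
    have hl : leftLim A s = leftLim A' s := leftLim_eq_of_tendsto htd
    have hAs : A' s = A s := by simp [hA', max_eq_left hs.1.le]
    rw [jumpOf, hl, hAs]
  have hnn : ∀ s ∈ Set.Ioc (0 : ℝ) t, 0 ≤ jumpOf A s := by
    intro s hs
    rw [hjump s hs]
    linarith [monoA'.leftLim_le (le_refl s)]
  refine ⟨hnn, ?_⟩
  have hmeas : ∀ s ∈ Set.Ioc (0 : ℝ) t, jumpOf A s = (F.measure {s}).toReal := by
    intro s hs
    rw [F.measure_singleton, hjump s hs, ENNReal.toReal_ofReal]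
    linarith [monoA'.leftLim_le (le_refl s)]
  have key : ∑' s : Set.Ioc (0 : ℝ) t, F.measure {(s : ℝ)} ≠ ⊤ := by
    have hb : ∑' s : Set.Ioc (0 : ℝ) t, F.measure {(s : ℝ)} ≤ F.measure (Set.Ioc 0 t) := by
      refine Summable.tsum_le_of_sum_le ENNReal.summable (fun u => ?_)
      have hdis : (u : Set (Set.Ioc (0:ℝ) t)).PairwiseDisjoint (fun s => ({(s:ℝ)} : Set ℝ)) :=
        fun x _ y _ hxy => by
          simp only [Set.disjoint_singleton_left, Set.mem_singleton_iff]
          exact fun h => hxy (Subtype.coe_injective h)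
      have := MeasureTheory.measure_biUnion_finset (μ := F.measure) hdis
        (fun s _ => measurableSet_singleton _)
      rw [← this]
      apply MeasureTheory.measure_mono
      intro x hx
      simp only [Set.mem_iUnion] at hx
      obtain ⟨s, _, hs⟩ := hx
      rw [Set.mem_singleton_iff] at hs
      exact hs ▸ s.2
    exact ne_top_of_le_ne_top (by rw [F.measure_Ioc]; exact ENNReal.ofReal_ne_top) hb
  have := ENNReal.summable_toReal key
  exact this.congr (fun s => (hmeas s s.2).symm)

end aux

/-- Let `A` and `B` be right-continuous, non-decreasing functions starting at zero. Then
`E(A)⁻¹ · E(B) = E(C)`, where `C = B^c − A^c + Σ_{s ≤ ·} (ΔB_s − ΔA_s)/(1 + ΔA_s)`, all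
stochastic exponentials being given by the Doléans-Dade formula
`E(V)_t = e^{V^c_t} ∏_{s ≤ t} (1 + ΔV_s)`. -/
theorem stochExp_inv_mul (A B : ℝ → ℝ)
    (hA_mono : MonotoneOn A (Set.Ici 0))
    (hA_rc : ∀ t ∈ Set.Ici (0 : ℝ), ContinuousWithinAt A (Set.Ici t) t)
    (hA0 : A 0 = 0)
    (hB_mono : MonotoneOn B (Set.Ici 0))
    (hB_rc : ∀ t ∈ Set.Ici (0 : ℝ), ContinuousWithinAt B (Set.Ici t) t)
    (hB0 : B 0 = 0) :
    ∀ t ∈ Set.Ici (0 : ℝ),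
      (Real.exp (contPart A t) * ∏' s : Set.Ioc (0 : ℝ) t, (1 + jumpOf A s))⁻¹ *
          (Real.exp (contPart B t) * ∏' s : Set.Ioc (0 : ℝ) t, (1 + jumpOf B s)) =
        Real.exp (contPart B t - contPart A t) *
          ∏' s : Set.Ioc (0 : ℝ) t,
            (1 + (jumpOf B s - jumpOf A s) / (1 + jumpOf A s)) := by
  intro t ht
  obtain ⟨hAnn, hAsum⟩ := jump_facts A hA_mono hA_rc t
  obtain ⟨hBnn, hBsum⟩ := jump_facts B hB_mono hB_rc t
  obtain ⟨a, ha1, hPA⟩ := hasProd_one_add hAsum (fun s => hAnn s s.2)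
  obtain ⟨b, hb1, hPB⟩ := hasProd_one_add hBsum (fun s => hBnn s s.2)
  have ha0 : a ≠ 0 := by linarith
  have hPAinv : HasProd (fun s : Set.Ioc (0:ℝ) t => (1 + jumpOf A ↑s)⁻¹) a⁻¹ := by
    have h2 : Filter.Tendsto (fun u : Finset (Set.Ioc (0:ℝ) t) =>
        (∏ s ∈ u, (1 + jumpOf A ↑s))⁻¹) Filter.atTop (nhds a⁻¹) :=
      Filter.Tendsto.inv₀ hPA ha0
    simpa [HasProd, Finset.prod_inv_distrib] using h2
  have hPC : HasProd
      (fun s : Set.Ioc (0:ℝ) t => (1 + jumpOf B ↑s) * (1 + jumpOf A ↑s)⁻¹) (b * a⁻¹) :=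
    hPB.mul hPAinv
  have hfeq : (fun s : Set.Ioc (0:ℝ) t => 1 + (jumpOf B ↑s - jumpOf A ↑s) / (1 + jumpOf A ↑s))
      = fun s : Set.Ioc (0:ℝ) t => (1 + jumpOf B ↑s) * (1 + jumpOf A ↑s)⁻¹ := by
    funext s
    have h : (1 : ℝ) + jumpOf A ↑s ≠ 0 := by have := hAnn ↑s s.2; linarith
    field_simp
    ring
  rw [hPA.tprod_eq, hPB.tprod_eq, hfeq, hPC.tprod_eq, Real.exp_sub]
  have he : Real.exp (contPart A t) ≠ 0 := Real.exp_ne_zero _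
  field_simp
end

section
/- Let A be a right-continuous non-decreasing function with A(0)=0 and 0 < γ < β. Then for every t ≥ 0, ∫_{[t,∞)} E(γA)_s^{−1} dA_s ≤ (1/γ)·E(γA)_{t−}^{−1}, where the integral is the Lebesgue–Stieltjes integral with respect to dA. -/
open MeasureTheory Filter Set Function Topology

namespace StochExpAux

noncomputable def Sg (A : StieltjesFunction ℝ) (γ : ℝ) (u v : ℝ) : ℝ :=
  ∑' s : Set.Ioc u v, (Real.log (1 + γ * jumpOf A s) - γ * jumpOf A s)

variable (A : StieltjesFunction ℝ) (γ : ℝ)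

lemma jump_nonneg (s : ℝ) : 0 ≤ jumpOf A s :=
  sub_nonneg.2 (A.mono.leftLim_le le_rfl)

lemma jump_le {u v s : ℝ} (hus : u < s) (hsv : s ≤ v) : jumpOf A s ≤ A v - A u :=
  sub_le_sub (A.mono hsv) (A.mono.le_leftLim hus)

lemma sum_jump_le {u v : ℝ} (huv : u ≤ v) (F : Finset ℝ) (hF : ↑F ⊆ Set.Ioc u v) :
    ∑ s ∈ F, jumpOf A s ≤ A v - A u := by
  have h2 : A.measure ↑F = ∑ s ∈ F, ENNReal.ofReal (jumpOf A s) := by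
    rw [show (↑F : Set ℝ) = ⋃ s ∈ F, {s} by ext x; simp,
      measure_biUnion_finset (fun x _ y _ hxy => by simpa using hxy)
        (fun _ _ => measurableSet_singleton _)]
    exact Finset.sum_congr rfl fun s _ => A.measure_singleton s
  have h3 : A.measure ↑F ≤ A.measure (Set.Ioc u v) := measure_mono hF
  rw [A.measure_Ioc, h2] at h3
  have h4 := ENNReal.toReal_mono ENNReal.ofReal_ne_top h3
  rw [ENNReal.toReal_sum (fun _ _ => ENNReal.ofReal_ne_top),
    ENNReal.toReal_ofReal (sub_nonneg.2 (A.mono huv))] at h4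
  calc ∑ s ∈ F, jumpOf A s = ∑ s ∈ F, (ENNReal.ofReal (jumpOf A s)).toReal := by
        refine Finset.sum_congr rfl fun s _ => ?_
        rw [ENNReal.toReal_ofReal (jump_nonneg A s)]
    _ ≤ A v - A u := h4

lemma finsum_jump_le {u v : ℝ} (huv : u ≤ v) (F : Finset (Set.Ioc u v)) :
    ∑ s ∈ F, jumpOf A s ≤ A v - A u := by
  rw [show ∑ s ∈ F, jumpOf A (s : ℝ) = ∑ s ∈ F.image Subtype.val, jumpOf A s from
    (Finset.sum_image (fun x _ y _ h => Subtype.val_injective h)).symm]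
  refine sum_jump_le A huv _ ?_
  intro x hx
  simp only [Finset.coe_image, Set.mem_image] at hx
  obtain ⟨s, _, rfl⟩ := hx
  exact s.2

lemma summable_jump {u v : ℝ} (huv : u ≤ v) :
    Summable (fun s : Set.Ioc u v => jumpOf A s) :=
  summable_of_sum_le (fun s => jump_nonneg A s) (finsum_jump_le A huv)

lemma tsum_jump_le {u v : ℝ} (huv : u ≤ v) :
    ∑' s : Set.Ioc u v, jumpOf A s ≤ A v - A u :=
  Summable.tsum_le_of_sum_le (summable_jump A huv) (finsum_jump_le A huv)

lemma log_one_add_ge {x : ℝ} (hx : 0 ≤ x) : x - x ^ 2 ≤ Real.log (1 + x) := by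
  have h2 : Real.log (1 + x)⁻¹ ≤ (1 + x)⁻¹ - 1 :=
    Real.log_le_sub_one_of_pos (by positivity)
  rw [Real.log_inv] at h2
  have h3 : 1 - (1 + x)⁻¹ ≤ Real.log (1 + x) := by linarith
  have h1x : (0:ℝ) < 1 + x := by positivity
  have h4 : (1 + x)⁻¹ ≤ 1 - x + x ^ 2 := by
    rw [inv_eq_one_div, div_le_iff₀ h1x]
    nlinarith
  linarith

lemma log_one_add_le {x : ℝ} (hx : 0 ≤ x) : Real.log (1 + x) ≤ x := by
  have := Real.log_le_sub_one_of_pos (show (0:ℝ) < 1 + x by positivity)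
  linarith

lemma summable_g (hγ : 0 < γ) {u v : ℝ} (huv : u ≤ v) :
    Summable (fun s : Set.Ioc u v => γ * jumpOf A s - Real.log (1 + γ * jumpOf A s)) := by
  refine Summable.of_nonneg_of_le (fun s => ?_) (fun s => ?_)
    ((summable_jump A huv).mul_left (γ * (γ * (A v - A u))))
  · have := log_one_add_le (x := γ * jumpOf A s)
      (mul_nonneg hγ.le (jump_nonneg A s))
    linarith
  · have hj0 := jump_nonneg A (s : ℝ)
    have hjle : jumpOf A s ≤ A v - A u := jump_le A s.2.1 s.2.2
    have h1 := log_one_add_ge (x := γ * jumpOf A s)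
      (mul_nonneg hγ.le (jump_nonneg A s))
    nlinarith [mul_le_mul_of_nonneg_left hjle
      (mul_nonneg (mul_nonneg hγ.le hγ.le) hj0)]

lemma summable_log (hγ : 0 < γ) {u v : ℝ} (huv : u ≤ v) :
    Summable (fun s : Set.Ioc u v => Real.log (1 + γ * jumpOf A s)) := by
  have h := ((summable_jump A huv).mul_left γ).sub (summable_g A γ hγ huv)
  simpa using h

lemma hasProd_factors (hγ : 0 < γ) {u v : ℝ} (huv : u ≤ v) :
    HasProd (fun s : Set.Ioc u v => (1 + γ * jumpOf A s) * Real.exp (-(γ * jumpOf A s)))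
      (Real.exp (Sg A γ u v)) := by
  have hsum : Summable (fun s : Set.Ioc u v =>
      Real.log (1 + γ * jumpOf A s) - γ * jumpOf A s) := by
    have := (summable_g A γ hγ huv).neg
    simpa using this
  have h := hsum.hasSum.rexp
  rw [show Real.exp (Sg A γ u v) = Real.exp (∑' s : Set.Ioc u v,
    (Real.log (1 + γ * jumpOf A s) - γ * jumpOf A s)) from rfl]
  convert h using 1
  funext s
  have hpos : (0:ℝ) < 1 + γ * jumpOf A s := by
    have := mul_nonneg hγ.le (jump_nonneg A (s:ℝ)); linarith
  show (1 + γ * jumpOf A s) * Real.exp (-(γ * jumpOf A s)) =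
    Real.exp (Real.log (1 + γ * jumpOf A s) - γ * jumpOf A s)
  rw [Real.exp_sub, Real.exp_log hpos, div_eq_mul_inv, ← Real.exp_neg]

lemma log_superadd {ι : Type*} (F : Finset ι) (a : ι → ℝ) (ha : ∀ i, 0 ≤ a i) :
    Real.log (1 + ∑ i ∈ F, a i) ≤ ∑ i ∈ F, Real.log (1 + a i) := by
  classical
  induction F using Finset.cons_induction with
  | empty => simp
  | cons i F hi ih =>
    rw [Finset.sum_cons, Finset.sum_cons]
    have hS : 0 ≤ ∑ i ∈ F, a i := Finset.sum_nonneg fun i _ => ha i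
    have h1 : (0:ℝ) < 1 + a i := by have := ha i; linarith
    have h2 : (0:ℝ) < 1 + ∑ i ∈ F, a i := by linarith
    calc Real.log (1 + (a i + ∑ i ∈ F, a i))
        ≤ Real.log ((1 + a i) * (1 + ∑ i ∈ F, a i)) := by
          apply Real.log_le_log (by linarith [ha i])
          nlinarith [ha i]
      _ = Real.log (1 + a i) + Real.log (1 + ∑ i ∈ F, a i) :=
          Real.log_mul (by linarith) (by linarith)
      _ ≤ Real.log (1 + a i) + ∑ i ∈ F, Real.log (1 + a i) := by linarith

lemma tsum_log_ge (hγ : 0 < γ) {u v : ℝ} (huv : u ≤ v) :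
    Real.log (1 + γ * ∑' s : Set.Ioc u v, jumpOf A s) ≤
      ∑' s : Set.Ioc u v, Real.log (1 + γ * jumpOf A s) := by
  have hj := (summable_jump A huv).hasSum
  have h2 : Tendsto (fun F : Finset (Set.Ioc u v) =>
      Real.log (1 + γ * ∑ s ∈ F, jumpOf A s)) atTop
      (𝓝 (Real.log (1 + γ * ∑' s : Set.Ioc u v, jumpOf A s))) := by
    have hpos : (0:ℝ) < 1 + γ * ∑' s : Set.Ioc u v, jumpOf A s := by
      have : 0 ≤ ∑' s : Set.Ioc u v, jumpOf A s := tsum_nonneg fun s => jump_nonneg A s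
      positivity
    have hc : ContinuousAt (fun y : ℝ => Real.log (1 + γ * y))
        (∑' s : Set.Ioc u v, jumpOf A s) := by
      apply Real.continuousAt_log (by positivity) |>.comp
      fun_prop
    exact hc.tendsto.comp hj
  refine le_of_tendsto_of_tendsto' h2 (summable_log A γ hγ huv).hasSum (fun F => ?_)
  rw [Finset.mul_sum]
  exact log_superadd F (fun s => γ * jumpOf A s)
    (fun s => mul_nonneg hγ.le (jump_nonneg A s))

lemma Sg_empty {u v : ℝ} (hvu : v ≤ u) : Sg A γ u v = 0 := by
  unfold Sg
  have : Set.Ioc u v = (∅ : Set ℝ) := Set.Ioc_eq_empty (by exact fun h => absurd hvu (not_le.2 h))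
  rw [this]
  haveI : IsEmpty ((∅ : Set ℝ) : Set ℝ) := by simp
  exact tsum_empty

lemma Sg_nonpos (hγ : 0 < γ) {u v : ℝ} : Sg A γ u v ≤ 0 := by
  rcases le_or_gt v u with h | h
  · rw [Sg_empty A γ h]
  unfold Sg
  have h1 : Sg A γ u v = -∑' s : Set.Ioc u v,
      (γ * jumpOf A s - Real.log (1 + γ * jumpOf A s)) := by
    unfold Sg; rw [← tsum_neg]; congr 1; funext s; ring
  rw [show (∑' s : Set.Ioc u v, (Real.log (1 + γ * jumpOf A s) - γ * jumpOf A s)) =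
    Sg A γ u v from rfl, h1, neg_nonpos]
  exact tsum_nonneg fun s => by
    have := log_one_add_le (x := γ * jumpOf A s) (mul_nonneg hγ.le (jump_nonneg A s))
    linarith

lemma exp_incr_ge (hγ : 0 < γ) {u v : ℝ} (huv : u ≤ v) :
    1 + γ * (A v - A u) ≤ Real.exp (γ * (A v - A u) + Sg A γ u v) := by
  set D := A v - A u with hD
  have hD0 : 0 ≤ D := sub_nonneg.2 (A.mono huv)
  set J := ∑' s : Set.Ioc u v, jumpOf A s with hJ
  have hJ0 : 0 ≤ J := tsum_nonneg fun s => jump_nonneg A s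
  have hJD : J ≤ D := tsum_jump_le A huv
  have hT := tsum_log_ge A γ hγ huv
  have hSg : Sg A γ u v = (∑' s : Set.Ioc u v, Real.log (1 + γ * jumpOf A s)) - γ * J := by
    unfold Sg
    rw [((summable_log A γ hγ huv).hasSum.sub
      (((summable_jump A huv).mul_left γ).hasSum)).tsum_eq]
    rw [hJ, ← tsum_mul_left]
  have hJpos : (0:ℝ) < 1 + γ * J := by nlinarith
  calc 1 + γ * D ≤ (1 + γ * (D - J)) * (1 + γ * J) := by
        nlinarith [mul_nonneg (mul_nonneg (mul_nonneg hγ.le hγ.le) (sub_nonneg.2 hJD)) hJ0]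
    _ ≤ Real.exp (γ * (D - J)) * (1 + γ * J) := by
        have := Real.add_one_le_exp (γ * (D - J))
        nlinarith
    _ = Real.exp (γ * (D - J) + Real.log (1 + γ * J)) := by
        rw [Real.exp_add, Real.exp_log hJpos]
    _ ≤ Real.exp (γ * D + Sg A γ u v) := by
        apply Real.exp_le_exp.2
        rw [hSg]
        have : γ * J ≤ γ * D := by nlinarith
        linarith

variable {E : ℝ → ℝ}

lemma E_split (hγ : 0 < γ) (hE' : ∀ t, E t = Real.exp (γ * A t + Sg A γ 0 t))
    {u v : ℝ} (h0u : 0 ≤ u) (huv : u ≤ v) :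
    E v = E u * Real.exp (γ * (A v - A u) + Sg A γ u v) := by
  have hsplit : Sg A γ 0 v = Sg A γ 0 u + Sg A γ u v := by
    unfold Sg
    rw [← Set.Ioc_union_Ioc_eq_Ioc h0u huv,
      Summable.tsum_union_disjoint (f := fun s : ℝ =>
        Real.log (1 + γ * jumpOf A s) - γ * jumpOf A s) (Set.Ioc_disjoint_Ioc_of_le le_rfl)
      (by have := (summable_g A γ hγ h0u).neg; simpa [Function.comp_def] using this)
      (by have := (summable_g A γ hγ huv).neg; simpa [Function.comp_def] using this)]
  rw [hE' u, hE' v, hsplit, ← Real.exp_add]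
  congr 1
  ring

lemma E_incr (hγ : 0 < γ) (hE' : ∀ t, E t = Real.exp (γ * A t + Sg A γ 0 t))
    {u v : ℝ} (h0u : 0 ≤ u) (huv : u ≤ v) :
    E u * (1 + γ * (A v - A u)) ≤ E v := by
  rw [E_split A γ hγ hE' h0u huv]
  exact mul_le_mul_of_nonneg_left (exp_incr_ge A γ hγ huv) (by rw [hE' u]; positivity)

lemma E_of_nonpos (hE' : ∀ t, E t = Real.exp (γ * A t + Sg A γ 0 t))
    (hA0 : ∀ s : ℝ, s ≤ 0 → A s = 0) {u : ℝ} (hu : u ≤ 0) : E u = 1 := by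
  rw [hE' u, hA0 u hu, Sg_empty A γ hu]
  simp

lemma E_incr' (hγ : 0 < γ) (hE' : ∀ t, E t = Real.exp (γ * A t + Sg A γ 0 t))
    (hA0 : ∀ s : ℝ, s ≤ 0 → A s = 0) {u v : ℝ} (huv : u ≤ v) :
    E u * (1 + γ * (A v - A u)) ≤ E v := by
  rcases le_or_gt 0 u with h0u | hu0
  · exact E_incr A γ hγ hE' h0u huv
  · rw [E_of_nonpos A γ hE' hA0 hu0.le, hA0 u hu0.le, one_mul]
    rcases le_or_gt v 0 with hv0 | hv0
    · rw [E_of_nonpos A γ hE' hA0 hv0, hA0 v hv0]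
      simp
    · have := E_incr A γ hγ hE' le_rfl hv0.le
      rw [E_of_nonpos A γ hE' hA0 le_rfl, hA0 0 le_rfl, one_mul] at this
      simpa using this

lemma one_le_E (hγ : 0 < γ) (hE' : ∀ t, E t = Real.exp (γ * A t + Sg A γ 0 t))
    (hA0 : ∀ s : ℝ, s ≤ 0 → A s = 0) (v : ℝ) : 1 ≤ E v := by
  rcases le_or_gt v 0 with hv0 | hv0
  · rw [E_of_nonpos A γ hE' hA0 hv0]
  · have h := E_incr' A γ hγ hE' hA0 (le_of_lt hv0) (u := 0)
    rw [E_of_nonpos A γ hE' hA0 le_rfl, hA0 0 le_rfl, one_mul] at h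
    have hA : 0 ≤ A v := by
      have := A.mono hv0.le; rw [hA0 0 le_rfl] at this; linarith
    nlinarith

lemma E_mono (hγ : 0 < γ) (hE' : ∀ t, E t = Real.exp (γ * A t + Sg A γ 0 t))
    (hA0 : ∀ s : ℝ, s ≤ 0 → A s = 0) : Monotone E := by
  intro u v huv
  have h := E_incr' A γ hγ hE' hA0 huv
  have h1 : 1 ≤ E u := one_le_E A γ hγ hE' hA0 u
  have hA : 0 ≤ A v - A u := sub_nonneg.2 (A.mono huv)
  nlinarith [mul_nonneg (le_trans zero_le_one h1) (mul_nonneg hγ.le hA)]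

lemma E_rightCont (hγ : 0 < γ) (hE' : ∀ t, E t = Real.exp (γ * A t + Sg A γ 0 t))
    (hA0 : ∀ s : ℝ, s ≤ 0 → A s = 0) (x : ℝ) : ContinuousWithinAt E (Set.Ici x) x := by
  rcases lt_or_ge x 0 with hx0 | hx0
  · have hev : ∀ᶠ y in 𝓝[Set.Ici x] x, E y = 1 := by
      filter_upwards [mem_nhdsWithin_of_mem_nhds (Iio_mem_nhds hx0)] with y hy
      exact E_of_nonpos A γ hE' hA0 (le_of_lt hy)
    have hx1 : E x = 1 := E_of_nonpos A γ hE' hA0 hx0.le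
    unfold ContinuousWithinAt
    rw [hx1]
    exact Tendsto.congr' (by filter_upwards [hev] with y hy using hy.symm) tendsto_const_nhds
  · have hupper : ∀ᶠ y in 𝓝[Set.Ici x] x, E y ≤ E x * Real.exp (γ * (A y - A x)) := by
      filter_upwards [self_mem_nhdsWithin] with y hy
      rw [E_split A γ hγ hE' hx0 hy]
      apply mul_le_mul_of_nonneg_left _ (by rw [hE' x]; positivity)
      apply Real.exp_le_exp.2
      have := Sg_nonpos A γ hγ (u := x) (v := y)
      linarith
    have hlower : ∀ᶠ y in 𝓝[Set.Ici x] x, E x ≤ E y := by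
      filter_upwards [self_mem_nhdsWithin] with y hy
      exact E_mono A γ hγ hE' hA0 hy
    have hA := A.right_continuous x
    have hT : Tendsto (fun y => E x * Real.exp (γ * (A y - A x))) (𝓝[Set.Ici x] x)
        (𝓝 (E x)) := by
      have t1 : Tendsto (fun y => γ * (A y - A x)) (𝓝[Set.Ici x] x) (𝓝 0) := by
        have h0 : Tendsto (fun y => A y - A x) (𝓝[Set.Ici x] x) (𝓝 (A x - A x)) :=
          Tendsto.sub hA tendsto_const_nhds
        rw [sub_self] at h0
        simpa using h0.const_mul γ
      have t2 : Tendsto (fun y => Real.exp (γ * (A y - A x))) (𝓝[Set.Ici x] x) (𝓝 1) := by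
        have := (Real.continuous_exp.tendsto 0).comp t1
        simpa [Function.comp_def] using this
      have := tendsto_const_nhds (x := E x) (f := 𝓝[Set.Ici x] x) |>.mul t2
      simpa using this
    exact tendsto_of_tendsto_of_tendsto_of_le_of_le' tendsto_const_nhds hT hlower hupper


lemma one_le_leftLim (hγ : 0 < γ) (hE' : ∀ t, E t = Real.exp (γ * A t + Sg A γ 0 t))
    (hA0 : ∀ s : ℝ, s ≤ 0 → A s = 0) (x : ℝ) : 1 ≤ leftLim E x :=
  ge_of_tendsto ((E_mono A γ hγ hE' hA0).tendsto_leftLim x)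
    (Eventually.of_forall fun y => one_le_E A γ hγ hE' hA0 y)

lemma E_incr_leftLim (hγ : 0 < γ) (hE' : ∀ t, E t = Real.exp (γ * A t + Sg A γ 0 t))
    (hA0 : ∀ s : ℝ, s ≤ 0 → A s = 0) {u v : ℝ} (huv : u ≤ v) :
    leftLim E u * (1 + γ * (A v - leftLim (↑A : ℝ → ℝ) u)) ≤ E v := by
  have h1 : Tendsto (fun w => E w * (1 + γ * (A v - A w))) (𝓝[<] u)
      (𝓝 (leftLim E u * (1 + γ * (A v - leftLim (↑A : ℝ → ℝ) u)))) := by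
    exact ((E_mono A γ hγ hE' hA0).tendsto_leftLim u).mul
      (tendsto_const_nhds.add
        ((tendsto_const_nhds.sub (A.mono.tendsto_leftLim u)).const_mul γ))
  refine le_of_tendsto h1 ?_
  filter_upwards [self_mem_nhdsWithin] with w hw
  exact E_incr' A γ hγ hE' hA0 (le_trans (le_of_lt hw) huv)

end StochExpAux

open StochExpAux

/-- Let `A` be a right-continuous non-decreasing function with `A 0 = 0`
(vanishing on `(-∞,0]`) and `0 < γ < β`. If `E` is the Doléans-Dade exponential of
`γA`, i.e. `E_t = e^{γA_t} ∏_{s ≤ t} (1 + γΔA_s) e^{−γΔA_s}`, then for every `t ≥ 0`,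
`∫_{[t,∞)} E_s⁻¹ dA_s ≤ (1/γ) · (E_{t−})⁻¹`, where the integral is the
Lebesgue–Stieltjes integral with respect to `dA`. -/
theorem integral_inv_stochExp_le (A : StieltjesFunction ℝ) (γ β : ℝ)
    (hγ : 0 < γ) (hγβ : γ < β)
    (hA0 : ∀ s : ℝ, s ≤ 0 → A s = 0)
    (E : ℝ → ℝ)
    (hE : ∀ t, E t = Real.exp (γ * A t) *
      ∏' s : Set.Ioc (0 : ℝ) t,
        ((1 + γ * jumpOf A s) * Real.exp (-(γ * jumpOf A s)))) :
    ∀ t : ℝ, 0 ≤ t →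
      ∫ s in Set.Ici t, (E s)⁻¹ ∂A.measure ≤ γ⁻¹ * (Function.leftLim E t)⁻¹ := by
  have hE' : ∀ τ, E τ = Real.exp (γ * A τ + Sg A γ 0 τ) := by
    intro τ
    rcases le_or_gt 0 τ with h | h
    · rw [hE τ, (hasProd_factors A γ hγ h).tprod_eq, ← Real.exp_add]
    · have hempty : Set.Ioc (0:ℝ) τ = ∅ := Set.Ioc_eq_empty (not_lt.2 h.le)
      haveI : IsEmpty (Set.Ioc (0:ℝ) τ) := Set.isEmpty_coe_sort.2 hempty
      rw [hE τ, Sg_empty A γ h.le, tprod_empty, hA0 τ h.le]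
      simp
  intro t ht
  have h1E : ∀ v, 1 ≤ E v := one_le_E A γ hγ hE' hA0
  have hEpos : ∀ v, (0:ℝ) < E v := fun v => lt_of_lt_of_le zero_lt_one (h1E v)
  have hEmono : Monotone E := E_mono A γ hγ hE' hA0
  have hllE1 : ∀ x, 1 ≤ leftLim E x := one_le_leftLim A γ hγ hE' hA0
  have hGmono : Monotone (fun x : ℝ => -(E x)⁻¹) := by
    intro u v h
    have := hEmono h
    have h1 := hEpos u
    simp only [neg_le_neg_iff]
    exact inv_anti₀ h1 this
  have hGrc : ∀ x, ContinuousWithinAt (fun x : ℝ => -(E x)⁻¹) (Set.Ici x) x := by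
    intro x
    have hc : ContinuousAt (fun r : ℝ => -r⁻¹) (E x) :=
      (continuousAt_inv₀ (ne_of_gt (hEpos x))).neg
    exact hc.comp_continuousWithinAt (E_rightCont A γ hγ hE' hA0 x)
  set G : StieltjesFunction ℝ := ⟨fun x => -(E x)⁻¹, hGmono, hGrc⟩ with hGdef
  have hGv : ∀ x, (↑G : ℝ → ℝ) x = -(E x)⁻¹ := fun x => rfl
  set μ := A.measure with hμdef
  set ν := G.measure with hνdef
  have hlG : ∀ x, leftLim (↑G : ℝ → ℝ) x = -(leftLim E x)⁻¹ := by
    intro x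
    apply leftLim_eq_of_tendsto
    have hne : leftLim E x ≠ 0 := by have := hllE1 x; intro h; rw [h] at this; linarith
    have hc : ContinuousAt (fun r : ℝ => -r⁻¹) (leftLim E x) :=
      (continuousAt_inv₀ hne).neg
    exact hc.tendsto.comp (hEmono.tendsto_leftLim x)
  have hKL : ∀ u v : ℝ, u ≤ v →
      leftLim E u * (1 + γ * (A v - leftLim (↑A : ℝ → ℝ) u)) ≤ E v :=
    fun u v h => E_incr_leftLim A γ hγ hE' hA0 h
  -- null set of points with vanishing ball measure
  have hN : μ {x : ℝ | ∃ r > 0, μ (Metric.closedBall x r) = 0} = 0 := by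
    apply measure_null_of_locally_null
    intro x hx
    obtain ⟨r, hr, h0⟩ := hx
    exact ⟨Metric.closedBall x r,
      mem_nhdsWithin_of_mem_nhds (Metric.closedBall_mem_nhds x hr), h0⟩
  -- a.e. lower bound on the density
  have hae : ∀ᵐ s ∂μ, ENNReal.ofReal (γ * (E s)⁻¹) ≤ ν.rnDeriv μ s := by
    have hbes := Besicovitch.ae_tendsto_rnDeriv ν μ
    have hN' : ∀ᵐ x ∂μ, ¬ ∃ r > 0, μ (Metric.closedBall x r) = 0 := by
      rw [ae_iff]; simp only [not_not]; exact hN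
    filter_upwards [hbes, hN'] with s hs hsN
    have hEr : ContinuousWithinAt E (Set.Ici s) s := E_rightCont A γ hγ hE' hA0 s
    have t1 : Tendsto (fun r : ℝ => s + r) (𝓝[>] (0:ℝ)) (𝓝[Set.Ici s] s) := by
      apply tendsto_nhdsWithin_of_tendsto_nhds_of_eventually_within
      · have h0 : Tendsto (fun r : ℝ => s + r) (𝓝 (0:ℝ)) (𝓝 (s + 0)) :=
          (continuous_add_left s).tendsto 0
        rw [add_zero] at h0
        exact h0.mono_left nhdsWithin_le_nhds
      · filter_upwards [self_mem_nhdsWithin] with r hr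
        exact le_add_of_nonneg_right (le_of_lt (Set.mem_Ioi.1 hr))
    have t2 : Tendsto (fun r => E (s + r)) (𝓝[>] (0:ℝ)) (𝓝 (E s)) :=
      Filter.Tendsto.comp hEr t1
    have t3 : Tendsto (fun r => ENNReal.ofReal (γ * (E (s + r))⁻¹)) (𝓝[>] (0:ℝ))
        (𝓝 (ENNReal.ofReal (γ * (E s)⁻¹))) := by
      have hc : ContinuousAt (fun y : ℝ => ENNReal.ofReal (γ * y⁻¹)) (E s) :=
        (ENNReal.continuous_ofReal.continuousAt).comp
          (continuousAt_const.mul (continuousAt_inv₀ (ne_of_gt (hEpos s))))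
      exact hc.tendsto.comp t2
    refine le_of_tendsto_of_tendsto t3 hs ?_
    filter_upwards [self_mem_nhdsWithin] with r hr
    have hrpos : (0:ℝ) < r := hr
    have hμB : μ (Metric.closedBall s r) ≠ 0 := fun h0 => hsN ⟨r, hrpos, h0⟩
    have hμBt : μ (Metric.closedBall s r) ≠ ⊤ := by
      rw [Real.closedBall_eq_Icc, hμdef, A.measure_Icc]
      exact ENNReal.ofReal_ne_top
    rw [ENNReal.le_div_iff_mul_le (Or.inl hμB) (Or.inl hμBt),
      Real.closedBall_eq_Icc, hμdef, hνdef, A.measure_Icc, G.measure_Icc]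
    have hinv0 : (0:ℝ) ≤ γ * (E (s + r))⁻¹ :=
      mul_nonneg hγ.le (inv_nonneg.2 (hEpos (s + r)).le)
    rw [← ENNReal.ofReal_mul hinv0]
    apply ENNReal.ofReal_le_ofReal
    rw [hGv (s + r), hlG (s - r)]
    have hx1 : 1 ≤ leftLim E (s - r) := hllE1 _
    have hy1 : 1 ≤ E (s + r) := h1E _
    have hD0 : 0 ≤ A (s + r) - leftLim (↑A : ℝ → ℝ) (s - r) :=
      sub_nonneg.2 (A.mono.leftLim_le (by linarith))
    have hKey := hKL (s - r) (s + r) (by linarith)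
    set x := leftLim E (s - r) with hxdef
    set y := E (s + r) with hydef
    set D := A (s + r) - leftLim (↑A : ℝ → ℝ) (s - r) with hDdef
    have hx0 : (0:ℝ) < x := by linarith
    have hy0 : (0:ℝ) < y := by linarith
    have h1 : x⁻¹ - y⁻¹ = (y - x) / (x * y) := inv_sub_inv (ne_of_gt hx0) (ne_of_gt hy0)
    have h2 : γ * y⁻¹ * D = (γ * D * x) / (x * y) := by field_simp
    have h3 : γ * D * x ≤ y - x := by nlinarith
    have hcalc : γ * y⁻¹ * D ≤ x⁻¹ - y⁻¹ := by
      rw [h1, h2]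
      gcongr
    linarith
  -- bound ν (Ici t)
  have hνIci : ν (Set.Ici t) ≤ ENNReal.ofReal ((leftLim E t)⁻¹) := by
    have hU : Set.Ici t = ⋃ n : ℕ, Set.Icc t (t + n) := by
      ext z
      simp only [Set.mem_Ici, Set.mem_iUnion, Set.mem_Icc]
      constructor
      · intro hz
        obtain ⟨n, hn⟩ := exists_nat_ge (z - t)
        exact ⟨n, hz, by linarith⟩
      · rintro ⟨n, h1, _⟩; exact h1
    have hdir : Directed (· ⊆ ·) (fun n : ℕ => Set.Icc t (t + n)) := by
      intro m n
      refine ⟨max m n, Set.Icc_subset_Icc le_rfl ?_, Set.Icc_subset_Icc le_rfl ?_⟩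
      · exact add_le_add_right (by exact_mod_cast le_max_left m n) t
      · exact add_le_add_right (by exact_mod_cast le_max_right m n) t
    rw [hU, Directed.measure_iUnion hdir]
    apply iSup_le
    intro n
    rw [hνdef, G.measure_Icc]
    apply ENNReal.ofReal_le_ofReal
    rw [hGv (t + n), hlG t]
    have : (0:ℝ) ≤ (E (t + n))⁻¹ := inv_nonneg.2 (hEpos _).le
    linarith
  -- the main lintegral chain
  have hmE : Measurable E := hEmono.measurable
  have hmeas : Measurable (fun s => ENNReal.ofReal ((E s)⁻¹)) :=
    ENNReal.measurable_ofReal.comp hmE.inv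
  have hIci : MeasurableSet (Set.Ici t) := measurableSet_Ici
  have L1 : ∫⁻ s in Set.Ici t, ENNReal.ofReal (γ * (E s)⁻¹) ∂μ ≤ ν (Set.Ici t) := by
    calc ∫⁻ s in Set.Ici t, ENNReal.ofReal (γ * (E s)⁻¹) ∂μ
        ≤ ∫⁻ s in Set.Ici t, ν.rnDeriv μ s ∂μ :=
          lintegral_mono_ae (ae_restrict_of_ae hae)
      _ = (μ.withDensity (ν.rnDeriv μ)) (Set.Ici t) := (withDensity_apply _ hIci).symm
      _ ≤ ν (Set.Ici t) := Measure.le_iff'.1 (Measure.withDensity_rnDeriv_le ν μ) _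
  have hγ0 : ENNReal.ofReal γ ≠ 0 := by
    simp only [ne_eq, ENNReal.ofReal_eq_zero, not_le]
    exact hγ
  have L3 : ∫⁻ s in Set.Ici t, ENNReal.ofReal ((E s)⁻¹) ∂μ ≤
      ENNReal.ofReal (γ⁻¹ * (leftLim E t)⁻¹) := by
    have hmul : ENNReal.ofReal γ * ∫⁻ s in Set.Ici t, ENNReal.ofReal ((E s)⁻¹) ∂μ ≤
        ENNReal.ofReal ((leftLim E t)⁻¹) := by
      rw [← lintegral_const_mul _ hmeas]
      refine le_trans (le_of_eq ?_) (L1.trans hνIci)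
      apply lintegral_congr
      intro s
      rw [← ENNReal.ofReal_mul hγ.le]
    have hdiv : ∫⁻ s in Set.Ici t, ENNReal.ofReal ((E s)⁻¹) ∂μ ≤
        ENNReal.ofReal ((leftLim E t)⁻¹) / ENNReal.ofReal γ :=
      (ENNReal.le_div_iff_mul_le (Or.inl hγ0) (Or.inl ENNReal.ofReal_ne_top)).2
        (by rwa [mul_comm])
    refine hdiv.trans (le_of_eq ?_)
    rw [← ENNReal.ofReal_div_of_pos hγ, div_eq_mul_inv, mul_comm]
  have hnn : 0 ≤ᵐ[μ.restrict (Set.Ici t)] fun s => (E s)⁻¹ :=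
    Eventually.of_forall fun s => inv_nonneg.2 (hEpos s).le
  have hsm : AEStronglyMeasurable (fun s => (E s)⁻¹) (μ.restrict (Set.Ici t)) :=
    (hmE.inv).aestronglyMeasurable
  rw [hμdef] at *
  rw [integral_eq_lintegral_of_nonneg_ae hnn hsm]
  apply ENNReal.toReal_le_of_le_ofReal
  · exact mul_nonneg (inv_nonneg.2 hγ.le) (inv_nonneg.2 (by linarith [hllE1 t]))
  · exact L3
end

section
/- Let A be a right-continuous non-decreasing finite function on [0,∞) with A(0)=0, and let 0 < γ < β, with jumps of A bounded by Φ ≥ 0 (ΔA_s ≤ Φ for all s). Then for all s ≥ 0, ∫_{(0,s]} E(βA)_{t−}·E(γA)_{t−}^{−1} dA_t ≤ ((1+γΦ)/(β−γ))·E(βA)_s·E(γA)_s^{−1}. -/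
open MeasureTheory

open Filter Topology Set

section AuxLemmas

lemma jumpOf_nonneg (A : StieltjesFunction ℝ) (u : ℝ) : 0 ≤ jumpOf A u :=
  sub_nonneg.2 (A.mono.leftLim_le le_rfl)

lemma sum_jumpOf_le (A : StieltjesFunction ℝ) {a b : ℝ} (hab : a ≤ b) (S : Finset ℝ)
    (hS : ∀ u ∈ S, u ∈ Set.Ioc a b) : ∑ u ∈ S, jumpOf A u ≤ A b - A a := by
  have h2 : A.measure (⋃ u ∈ S, {u}) = ∑ u ∈ S, ENNReal.ofReal (jumpOf A u) := by
    rw [measure_biUnion_finset]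
    · exact Finset.sum_congr rfl fun u _ => A.measure_singleton u
    · intro x _ y _ hxy
      simp [Function.onFun, Set.disjoint_singleton, hxy]
    · exact fun b _ => measurableSet_singleton b
  have h3 : (⋃ u ∈ S, {u} : Set ℝ) ⊆ Set.Ioc a b := by
    simp only [Set.iUnion_subset_iff, Set.singleton_subset_iff]
    exact hS
  have h4 : ∑ u ∈ S, ENNReal.ofReal (jumpOf A u) ≤ ENNReal.ofReal (A b - A a) := by
    rw [← h2, ← A.measure_Ioc]
    exact measure_mono h3
  have h5 : ENNReal.ofReal (∑ u ∈ S, jumpOf A u) ≤ ENNReal.ofReal (A b - A a) := by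
    rwa [ENNReal.ofReal_sum_of_nonneg fun u _ => jumpOf_nonneg A u]
  exact (ENNReal.ofReal_le_ofReal_iff (sub_nonneg.2 (A.mono hab))).1 h5

lemma sum_subtype_jumpOf_le (A : StieltjesFunction ℝ) {a b : ℝ} (hab : a ≤ b)
    (S : Finset (Set.Ioc a b)) : ∑ u ∈ S, jumpOf A ↑u ≤ A b - A a := by
  have h : ∑ u ∈ S, jumpOf A ↑u
      = ∑ v ∈ S.map ⟨Subtype.val, Subtype.val_injective⟩, jumpOf A v := by
    rw [Finset.sum_map]; rfl
  rw [h]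
  refine sum_jumpOf_le A hab _ ?_
  intro u hu
  simp only [Finset.mem_map, Function.Embedding.coeFn_mk] at hu
  obtain ⟨v, _, rfl⟩ := hu
  exact v.2

lemma summable_jumpOf (A : StieltjesFunction ℝ) (a b : ℝ) :
    Summable (fun u : Set.Ioc a b => jumpOf A ↑u) := by
  rcases le_or_gt a b with hab | hab
  · exact summable_of_sum_le (fun u => jumpOf_nonneg A _) (sum_subtype_jumpOf_le A hab)
  · haveI : IsEmpty (Set.Ioc a b) := by
      rw [Set.Ioc_eq_empty (not_lt.2 hab.le)]
      infer_instance
    exact Summable.of_finite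

lemma tsum_jumpOf_le (A : StieltjesFunction ℝ) {a b : ℝ} (hab : a ≤ b) :
    ∑' u : Set.Ioc a b, jumpOf A ↑u ≤ A b - A a :=
  Summable.tsum_le_of_sum_le (summable_jumpOf A a b) (sum_subtype_jumpOf_le A hab)

lemma aux_summable_log_one_add {ι : Type*} {x : ι → ℝ} (hx : ∀ i, 0 ≤ x i) (hs : Summable x) :
    Summable fun i => Real.log (1 + x i) := by
  refine Summable.of_nonneg_of_le (fun i => Real.log_nonneg (by linarith [hx i])) (fun i => ?_) hs
  have := Real.log_le_sub_one_of_pos (x := 1 + x i) (by linarith [hx i])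
  linarith

lemma aux_log_one_add_sum_le {ι : Type*} (x : ι → ℝ) (hx : ∀ i, 0 ≤ x i) (S : Finset ι) :
    Real.log (1 + ∑ i ∈ S, x i) ≤ ∑ i ∈ S, Real.log (1 + x i) := by
  classical
  induction S using Finset.induction_on with
  | empty => simp
  | @insert a S hmem ih =>
    rw [Finset.sum_insert hmem, Finset.sum_insert hmem]
    have hsnn : 0 ≤ ∑ i ∈ S, x i := Finset.sum_nonneg fun i _ => hx i
    have ha := hx a
    calc Real.log (1 + (x a + ∑ i ∈ S, x i))
        ≤ Real.log ((1 + x a) * (1 + ∑ i ∈ S, x i)) := by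
          apply Real.log_le_log (by linarith)
          nlinarith
      _ = Real.log (1 + x a) + Real.log (1 + ∑ i ∈ S, x i) :=
          Real.log_mul (by linarith) (by linarith)
      _ ≤ Real.log (1 + x a) + ∑ i ∈ S, Real.log (1 + x i) := by linarith

lemma aux_log_one_add_tsum_le {ι : Type*} {x : ι → ℝ} (hx : ∀ i, 0 ≤ x i) (hsum : Summable x) :
    Real.log (1 + ∑' i, x i) ≤ ∑' i, Real.log (1 + x i) := by
  have h1 : Filter.Tendsto (fun S : Finset ι => ∑ i ∈ S, Real.log (1 + x i)) Filter.atTop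
      (nhds (∑' i, Real.log (1 + x i))) := (aux_summable_log_one_add hx hsum).hasSum
  have htsum0 : 0 ≤ ∑' i, x i := tsum_nonneg hx
  have h2 : Filter.Tendsto (fun S : Finset ι => Real.log (1 + ∑ i ∈ S, x i)) Filter.atTop
      (nhds (Real.log (1 + ∑' i, x i))) := by
    have hc : ContinuousAt Real.log (1 + ∑' i, x i) := Real.continuousAt_log (by linarith)
    exact hc.tendsto.comp (hsum.hasSum.const_add 1)
  exact le_of_tendsto_of_tendsto' h2 h1 (fun S => aux_log_one_add_sum_le x hx S)

/-- The log of the Doléans jump factor. -/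
noncomputable def dexpLog (A : ℝ → ℝ) (θ : ℝ) (u : ℝ) : ℝ :=
  Real.log (1 + θ * jumpOf A u) - θ * jumpOf A u

lemma neg_dexpLog_le (A : StieltjesFunction ℝ) {θ : ℝ} (hθ : 0 ≤ θ) (u : ℝ) :
    -dexpLog A θ u ≤ θ * jumpOf A u := by
  have h : 0 ≤ Real.log (1 + θ * jumpOf A u) :=
    Real.log_nonneg (by nlinarith [jumpOf_nonneg A u])
  simp only [dexpLog]; linarith

lemma dexpLog_nonpos (A : StieltjesFunction ℝ) {θ : ℝ} (hθ : 0 ≤ θ) (u : ℝ) :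
    dexpLog A θ u ≤ 0 := by
  have h := Real.log_le_sub_one_of_pos (x := 1 + θ * jumpOf A u)
    (by nlinarith [jumpOf_nonneg A u])
  simp only [dexpLog]; linarith

lemma summable_dexpLog (A : StieltjesFunction ℝ) {θ : ℝ} (hθ : 0 ≤ θ) (a b : ℝ) :
    Summable (fun u : Set.Ioc a b => dexpLog A θ ↑u) := by
  rw [← summable_neg_iff]
  exact Summable.of_nonneg_of_le (fun u => neg_nonneg.2 (dexpLog_nonpos A hθ _))
    (fun u => neg_dexpLog_le A hθ _) ((summable_jumpOf A a b).mul_left θ)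

lemma hasProd_dexp (A : StieltjesFunction ℝ) {θ : ℝ} (hθ : 0 ≤ θ) (a b : ℝ) :
    HasProd (fun u : Set.Ioc a b => (1 + θ * jumpOf A ↑u) * Real.exp (-(θ * jumpOf A ↑u)))
      (Real.exp (∑' u : Set.Ioc a b, dexpLog A θ ↑u)) := by
  have h := (summable_dexpLog A hθ a b).hasSum.rexp
  have heq : (Real.exp ∘ fun u : Set.Ioc a b => dexpLog A θ ↑u)
      = fun u : Set.Ioc a b => (1 + θ * jumpOf A ↑u) * Real.exp (-(θ * jumpOf A ↑u)) := by
    funext u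
    have hpos : (0:ℝ) < 1 + θ * jumpOf A ↑u := by nlinarith [jumpOf_nonneg A ↑u]
    simp only [Function.comp_apply, dexpLog, Real.exp_sub, Real.exp_log hpos, Real.exp_neg]
    field_simp
  rwa [heq] at h

lemma tprod_dexp (A : StieltjesFunction ℝ) {θ : ℝ} (hθ : 0 ≤ θ) (a b : ℝ) :
    ∏' u : Set.Ioc a b, ((1 + θ * jumpOf A ↑u) * Real.exp (-(θ * jumpOf A ↑u)))
      = Real.exp (∑' u : Set.Ioc a b, dexpLog A θ ↑u) :=
  (hasProd_dexp A hθ a b).tprod_eq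

lemma tsum_Ioc_split {f : ℝ → ℝ} {t1 t2 : ℝ} (h1 : (0:ℝ) ≤ t1) (h2 : t1 ≤ t2)
    (ha : Summable fun u : Set.Ioc (0:ℝ) t1 => f ↑u)
    (hb : Summable fun u : Set.Ioc t1 t2 => f ↑u) :
    ∑' u : Set.Ioc (0:ℝ) t2, f ↑u
      = (∑' u : Set.Ioc (0:ℝ) t1, f ↑u) + ∑' u : Set.Ioc t1 t2, f ↑u := by
  rw [← Set.Ioc_union_Ioc_eq_Ioc h1 h2]
  exact Summable.tsum_union_disjoint (Set.Ioc_disjoint_Ioc_of_le le_rfl) ha hb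

end AuxLemmas

set_option maxHeartbeats 3200000

/-- Let `A` be a right-continuous non-decreasing finite function on `[0,∞)` with `A 0 = 0`
(vanishing on `(-∞,0]`), let `0 < γ < β`, and suppose the jumps of `A` are bounded by
`Φ ≥ 0`. If `Eβ` and `Eγ` are the Doléans-Dade exponentials of `βA` and `γA`,
then for all `s ≥ 0`,
`∫_{(0,s]} Eβ_{t−} · (Eγ_{t−})⁻¹ dA_t ≤ ((1+γΦ)/(β−γ)) · Eβ_s · (Eγ_s)⁻¹`. -/
theorem integral_ratio_stochExp_le (A : StieltjesFunction ℝ) (γ β Φ : ℝ)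
    (hγ : 0 < γ) (hγβ : γ < β) (hΦ : 0 ≤ Φ)
    (hA0 : ∀ s : ℝ, s ≤ 0 → A s = 0)
    (hjump : ∀ s : ℝ, jumpOf A s ≤ Φ)
    (Eβ Eγ : ℝ → ℝ)
    (hEβ : ∀ t, Eβ t = Real.exp (β * A t) *
      ∏' u : Set.Ioc (0 : ℝ) t,
        ((1 + β * jumpOf A u) * Real.exp (-(β * jumpOf A u))))
    (hEγ : ∀ t, Eγ t = Real.exp (γ * A t) *
      ∏' u : Set.Ioc (0 : ℝ) t,
        ((1 + γ * jumpOf A u) * Real.exp (-(γ * jumpOf A u)))) :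
    ∀ s : ℝ, 0 ≤ s →
      ∫ t in Set.Ioc 0 s, Function.leftLim Eβ t * (Function.leftLim Eγ t)⁻¹ ∂A.measure ≤
        (1 + γ * Φ) / (β - γ) * (Eβ s * (Eγ s)⁻¹) := by
  intro s hs
  have hβ0 : (0:ℝ) ≤ β := by linarith
  have hγ0 : (0:ℝ) ≤ γ := hγ.le
  have hK : 0 < β - γ := sub_pos.2 hγβ
  have hden : (0:ℝ) < 1 + γ * Φ := by nlinarith
  set c : ℝ := (β - γ) / (1 + γ * Φ) with hcdef
  have hc0 : 0 < c := div_pos hK hden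
  have hcK : c ≤ β - γ := div_le_self hK.le (by nlinarith)
  have hcc : c * (1 + γ * Φ) = β - γ := div_mul_cancel₀ _ (ne_of_gt hden)
  have hjnn : ∀ u : ℝ, 0 ≤ jumpOf A u := jumpOf_nonneg A
  set W : ℝ → ℝ → ℝ := fun θ t => θ * A t + ∑' u : Set.Ioc (0:ℝ) t, dexpLog A θ ↑u with hW
  have hEβ' : ∀ t, Eβ t = Real.exp (W β t) := by
    intro t
    simp only [hW]
    rw [hEβ t, tprod_dexp A hβ0 0 t, ← Real.exp_add]
  have hEγ' : ∀ t, Eγ t = Real.exp (W γ t) := by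
    intro t
    simp only [hW]
    rw [hEγ t, tprod_dexp A hγ0 0 t, ← Real.exp_add]
  set F : ℝ → ℝ := fun t => Real.exp (W β t - W γ t) with hFdef
  have hFval : ∀ t, Eβ t * (Eγ t)⁻¹ = F t := by
    intro t
    simp only [hFdef]
    rw [hEβ' t, hEγ' t, ← Real.exp_neg, ← Real.exp_add, sub_eq_add_neg]
  have hFpos : ∀ t, 0 < F t := fun t => Real.exp_pos _
  have hA00 : A 0 = 0 := hA0 0 le_rfl
  have hWz : ∀ θ : ℝ, ∀ t : ℝ, t ≤ 0 → W θ t = 0 := by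
    intro θ t ht
    have h1 : Set.Ioc (0:ℝ) t = ∅ := Set.Ioc_eq_empty (not_lt.2 ht)
    have h2 : ∑' u : (Set.Ioc (0:ℝ) t), dexpLog (A : ℝ → ℝ) θ ↑u = 0 := by
      haveI : IsEmpty (Set.Ioc (0:ℝ) t) := by rw [h1]; infer_instance
      exact tsum_empty
    simp only [hW, hA0 t ht, h2, mul_zero, add_zero]
  -- key interval estimates
  have hkey : ∀ t1 t2 : ℝ, 0 ≤ t1 → t1 ≤ t2 →
      F t1 * (1 + c * (A t2 - A t1)) ≤ F t2 ∧
        F t2 ≤ F t1 * Real.exp ((β - γ) * (A t2 - A t1)) := by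
    intro t1 t2 h01 h12
    have hδ0 : 0 ≤ A t2 - A t1 := sub_nonneg.2 (A.mono h12)
    have hJ0 : 0 ≤ ∑' u : Set.Ioc t1 t2, jumpOf A ↑u :=
      tsum_nonneg fun u => jumpOf_nonneg A _
    have hJδ : (∑' u : Set.Ioc t1 t2, jumpOf A ↑u) ≤ A t2 - A t1 := tsum_jumpOf_le A h12
    have hsplit : ∀ θ : ℝ, 0 ≤ θ →
        W θ t2 - W θ t1 = θ * (A t2 - A t1) + ∑' u : Set.Ioc t1 t2, dexpLog A θ ↑u := by
      intro θ hθ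
      simp only [hW]
      rw [tsum_Ioc_split h01 h12 (summable_dexpLog A hθ 0 t1) (summable_dexpLog A hθ t1 t2)]
      ring
    set L : ℝ → ℝ := fun u => Real.log (1 + β * jumpOf A u) - Real.log (1 + γ * jumpOf A u)
      with hLdef
    have hL0 : ∀ u : ℝ, 0 ≤ L u := by
      intro u
      simp only [hLdef]
      have hj := hjnn u
      have e1 : 0 ≤ γ * jumpOf A u := mul_nonneg hγ0 hj
      have e2 : γ * jumpOf A u ≤ β * jumpOf A u := mul_le_mul_of_nonneg_right hγβ.le hj
      exact sub_nonneg.2 (Real.log_le_log (by linarith) (by linarith))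
    have hLle : ∀ u : ℝ, L u ≤ (β - γ) * jumpOf A u := by
      intro u
      have hj := hjnn u
      have hq : (0:ℝ) ≤ 1 + γ * jumpOf A u := by linarith [mul_nonneg hγ0 hj]
      have h1 : (1 + β * jumpOf A u) ≤ (1 + γ * jumpOf A u) * Real.exp ((β - γ) * jumpOf A u) := by
        have h2 := Real.add_one_le_exp ((β - γ) * jumpOf A u)
        nlinarith [mul_le_mul_of_nonneg_left h2 hq,
          mul_nonneg (mul_nonneg hγ0 hj) (mul_nonneg hK.le hj)]
      have h2 : Real.log (1 + β * jumpOf A u)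
          ≤ Real.log ((1 + γ * jumpOf A u) * Real.exp ((β - γ) * jumpOf A u)) :=
        Real.log_le_log (by linarith [mul_nonneg hβ0 hj]) h1
      rw [Real.log_mul (by linarith [mul_nonneg hγ0 hj]) (Real.exp_ne_zero _),
        Real.log_exp] at h2
      simp only [hLdef]
      linarith
    have hLge : ∀ u : ℝ, Real.log (1 + c * jumpOf A u) ≤ L u := by
      intro u
      have hj := hjnn u
      have hjΦ := hjump u
      have e1 : γ * jumpOf A u ≤ γ * Φ := mul_le_mul_of_nonneg_left hjΦ hγ0
      have e2 : c * (1 + γ * jumpOf A u) ≤ β - γ := by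
        have := mul_le_mul_of_nonneg_left (show 1 + γ * jumpOf A u ≤ 1 + γ * Φ by linarith)
          hc0.le
        linarith [hcc]
      have e3 : (c * (1 + γ * jumpOf A u)) * jumpOf A u ≤ (β - γ) * jumpOf A u :=
        mul_le_mul_of_nonneg_right e2 hj
      have hq1 : (0:ℝ) < 1 + γ * jumpOf A u := by linarith [mul_nonneg hγ0 hj]
      have hq2 : (0:ℝ) < 1 + c * jumpOf A u := by linarith [mul_nonneg hc0.le hj]
      have h1 : (1 + γ * jumpOf A u) * (1 + c * jumpOf A u) ≤ 1 + β * jumpOf A u := by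
        nlinarith [e3]
      have h2 : Real.log ((1 + γ * jumpOf A u) * (1 + c * jumpOf A u))
          ≤ Real.log (1 + β * jumpOf A u) :=
        Real.log_le_log (mul_pos hq1 hq2) h1
      rw [Real.log_mul (ne_of_gt hq1) (ne_of_gt hq2)] at h2
      simp only [hLdef]
      linarith
    have hsumL : Summable (fun u : Set.Ioc t1 t2 => L ↑u) :=
      Summable.of_nonneg_of_le (fun u => hL0 _) (fun u => hLle _)
        ((summable_jumpOf A t1 t2).mul_left (β - γ))
    have hsumcj : Summable (fun u : Set.Ioc t1 t2 => c * jumpOf A ↑u) :=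
      (summable_jumpOf A t1 t2).mul_left c
    have hD : (W β t2 - W γ t2) - (W β t1 - W γ t1)
        = (β - γ) * ((A t2 - A t1) - ∑' u : Set.Ioc t1 t2, jumpOf A ↑u)
          + ∑' u : Set.Ioc t1 t2, L ↑u := by
      have h1 := hsplit β hβ0
      have h2 := hsplit γ hγ0
      have h3 : (∑' u : Set.Ioc t1 t2, dexpLog A β ↑u) - (∑' u : Set.Ioc t1 t2, dexpLog A γ ↑u)
          = (∑' u : Set.Ioc t1 t2, L ↑u)
            - (β - γ) * ∑' u : Set.Ioc t1 t2, jumpOf A ↑u := by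
        rw [← Summable.tsum_sub (summable_dexpLog A hβ0 t1 t2) (summable_dexpLog A hγ0 t1 t2)]
        have h4 : (fun u : Set.Ioc t1 t2 => dexpLog A β ↑u - dexpLog A γ ↑u)
            = fun u : Set.Ioc t1 t2 => L ↑u - (β - γ) * jumpOf A ↑u := by
          funext u
          simp only [dexpLog, hLdef]
          ring
        rw [h4, Summable.tsum_sub hsumL ((summable_jumpOf A t1 t2).mul_left (β - γ)), tsum_mul_left]
      linarith
    have hTLle : (∑' u : Set.Ioc t1 t2, L ↑u)
        ≤ (β - γ) * ∑' u : Set.Ioc t1 t2, jumpOf A ↑u := by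
      calc (∑' u : Set.Ioc t1 t2, L ↑u)
          ≤ ∑' u : Set.Ioc t1 t2, (β - γ) * jumpOf A ↑u :=
            Summable.tsum_le_tsum (fun u => hLle _) hsumL ((summable_jumpOf A t1 t2).mul_left (β - γ))
        _ = (β - γ) * ∑' u : Set.Ioc t1 t2, jumpOf A ↑u := tsum_mul_left
    have hTLge : Real.log (1 + c * ∑' u : Set.Ioc t1 t2, jumpOf A ↑u)
        ≤ ∑' u : Set.Ioc t1 t2, L ↑u := by
      have h1 := aux_log_one_add_tsum_le
        (x := fun u : Set.Ioc t1 t2 => c * jumpOf A ↑u)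
        (fun u => mul_nonneg hc0.le (hjnn _)) hsumcj
      have h2 : (∑' u : Set.Ioc t1 t2, c * jumpOf A ↑u)
          = c * ∑' u : Set.Ioc t1 t2, jumpOf A ↑u := tsum_mul_left
      have h3 : (∑' u : Set.Ioc t1 t2, Real.log (1 + c * jumpOf A ↑u))
          ≤ ∑' u : Set.Ioc t1 t2, L ↑u :=
        Summable.tsum_le_tsum (fun u => hLge _)
          (aux_summable_log_one_add (fun u => mul_nonneg hc0.le (hjnn _)) hsumcj) hsumL
      rw [h2] at h1
      linarith
    have hWeq : W β t2 - W γ t2 = (W β t1 - W γ t1)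
        + ((β - γ) * ((A t2 - A t1) - ∑' u : Set.Ioc t1 t2, jumpOf A ↑u)
          + ∑' u : Set.Ioc t1 t2, L ↑u) := by linarith
    constructor
    · have e1 : F t2 = F t1 * Real.exp
          ((β - γ) * ((A t2 - A t1) - ∑' u : Set.Ioc t1 t2, jumpOf A ↑u)
            + ∑' u : Set.Ioc t1 t2, L ↑u) := by
        simp only [hFdef]
        rw [hWeq, Real.exp_add]
      rw [e1]
      have e3 : 1 + (β - γ) * ((A t2 - A t1) - ∑' u : Set.Ioc t1 t2, jumpOf A ↑u)
          ≤ Real.exp ((β - γ) * ((A t2 - A t1) - ∑' u : Set.Ioc t1 t2, jumpOf A ↑u)) := by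
        linarith [Real.add_one_le_exp
          ((β - γ) * ((A t2 - A t1) - ∑' u : Set.Ioc t1 t2, jumpOf A ↑u))]
      have e4 : 1 + c * ∑' u : Set.Ioc t1 t2, jumpOf A ↑u
          ≤ Real.exp (∑' u : Set.Ioc t1 t2, L ↑u) := by
        have := Real.exp_le_exp.2 hTLge
        rwa [Real.exp_log (by nlinarith [hc0.le])] at this
      have e6 : 0 ≤ 1 + (β - γ) * ((A t2 - A t1) - ∑' u : Set.Ioc t1 t2, jumpOf A ↑u) := by
        nlinarith
      have e2 : (1 + (β - γ) * ((A t2 - A t1) - ∑' u : Set.Ioc t1 t2, jumpOf A ↑u))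
            * (1 + c * ∑' u : Set.Ioc t1 t2, jumpOf A ↑u)
          ≤ Real.exp ((β - γ) * ((A t2 - A t1) - ∑' u : Set.Ioc t1 t2, jumpOf A ↑u)
            + ∑' u : Set.Ioc t1 t2, L ↑u) := by
        rw [Real.exp_add]
        have e7 : 0 ≤ 1 + c * ∑' u : Set.Ioc t1 t2, jumpOf A ↑u := by nlinarith [hc0.le]
        exact mul_le_mul e3 e4 e7 (Real.exp_pos _).le
      have e5 : 1 + c * (A t2 - A t1)
          ≤ (1 + (β - γ) * ((A t2 - A t1) - ∑' u : Set.Ioc t1 t2, jumpOf A ↑u))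
            * (1 + c * ∑' u : Set.Ioc t1 t2, jumpOf A ↑u) := by
        nlinarith [hJ0, hJδ, mul_le_mul_of_nonneg_right hcK (sub_nonneg.2 hJδ),
          mul_nonneg (mul_nonneg (mul_nonneg hK.le hc0.le) hJ0) (sub_nonneg.2 hJδ),
          hc0.le, mul_nonneg hc0.le hJ0]
      calc F t1 * (1 + c * (A t2 - A t1))
          ≤ F t1 * ((1 + (β - γ) * ((A t2 - A t1) - ∑' u : Set.Ioc t1 t2, jumpOf A ↑u))
            * (1 + c * ∑' u : Set.Ioc t1 t2, jumpOf A ↑u)) :=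
            mul_le_mul_of_nonneg_left e5 (hFpos t1).le
        _ ≤ F t1 * Real.exp ((β - γ) * ((A t2 - A t1) - ∑' u : Set.Ioc t1 t2, jumpOf A ↑u)
            + ∑' u : Set.Ioc t1 t2, L ↑u) := mul_le_mul_of_nonneg_left e2 (hFpos t1).le
    · simp only [hFdef]
      rw [← Real.exp_add]
      apply Real.exp_le_exp.2
      nlinarith
  have hF1 : ∀ t : ℝ, t ≤ 0 → F t = 1 := by
    intro t ht
    simp only [hFdef, hWz β t ht, hWz γ t ht, sub_self, Real.exp_zero]
  have hF0 : F 0 = 1 := hF1 0 le_rfl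
  have hFmono : Monotone F := by
    intro t1 t2 h12
    rcases le_total t1 0 with h1 | h1
    · rcases le_total t2 0 with h2 | h2
      · rw [hF1 t1 h1, hF1 t2 h2]
      · have hk := (hkey 0 t2 le_rfl h2).1
        have hA2 : 0 ≤ A t2 - A 0 := sub_nonneg.2 (A.mono h2)
        rw [hF1 t1 h1, ← hF0]
        nlinarith [mul_nonneg (hFpos 0).le (mul_nonneg hc0.le hA2)]
    · have hk := (hkey t1 t2 h1 h12).1
      have hA2 : 0 ≤ A t2 - A t1 := sub_nonneg.2 (A.mono h12)
      nlinarith [mul_nonneg (hFpos t1).le (mul_nonneg hc0.le hA2)]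
  -- monotonicity of the exponentials
  have hWm : ∀ θ : ℝ, 0 ≤ θ → ∀ t1 t2 : ℝ, 0 ≤ t1 → t1 ≤ t2 → W θ t1 ≤ W θ t2 := by
    intro θ hθ t1 t2 h01 h12
    have hsplit : W θ t2 - W θ t1
        = θ * (A t2 - A t1) + ∑' u : Set.Ioc t1 t2, dexpLog A θ ↑u := by
      simp only [hW]
      rw [tsum_Ioc_split h01 h12 (summable_dexpLog A hθ 0 t1) (summable_dexpLog A hθ t1 t2)]
      ring
    have h1 : (∑' u : Set.Ioc t1 t2, -dexpLog A θ ↑u)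
        ≤ ∑' u : Set.Ioc t1 t2, θ * jumpOf A ↑u :=
      Summable.tsum_le_tsum (fun u => neg_dexpLog_le A hθ _)
        (summable_dexpLog A hθ t1 t2).neg ((summable_jumpOf A t1 t2).mul_left θ)
    rw [tsum_neg, tsum_mul_left] at h1
    have h2 : (∑' u : Set.Ioc t1 t2, jumpOf A ↑u) ≤ A t2 - A t1 := tsum_jumpOf_le A h12
    have h3 : 0 ≤ ∑' u : Set.Ioc t1 t2, jumpOf A ↑u := tsum_nonneg fun u => hjnn _
    nlinarith
  have hEmono : ∀ θ : ℝ, 0 ≤ θ → Monotone (fun t => Real.exp (W θ t)) := by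
    intro θ hθ t1 t2 h12
    simp only [Real.exp_le_exp]
    rcases le_total t1 0 with h1 | h1
    · rcases le_total t2 0 with h2 | h2
      · rw [hWz θ t1 h1, hWz θ t2 h2]
      · rw [hWz θ t1 h1, ← hWz θ 0 le_rfl]
        exact hWm θ hθ 0 t2 le_rfl h2
    · exact hWm θ hθ t1 t2 h1 h12
  have hEβmono : Monotone Eβ := by
    have h : Eβ = fun t => Real.exp (W β t) := funext hEβ'
    rw [h]; exact hEmono β hβ0
  have hEγmono : Monotone Eγ := by
    have h : Eγ = fun t => Real.exp (W γ t) := funext hEγ'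
    rw [h]; exact hEmono γ hγ0
  -- the integrand
  set G : ℝ → ℝ := fun t => Function.leftLim Eβ t * (Function.leftLim Eγ t)⁻¹ with hGdef
  have hG_eq : ∀ t, G t = Function.leftLim F t := by
    intro t
    have h1 := hEβmono.tendsto_leftLim t
    have h2 := hEγmono.tendsto_leftLim t
    have hpos : 0 < Function.leftLim Eγ t := by
      refine lt_of_lt_of_le ?_ (hEγmono.le_leftLim (show t - 1 < t by linarith))
      rw [hEγ' (t-1)]; exact Real.exp_pos _
    have h3 : Filter.Tendsto (fun u => Eβ u * (Eγ u)⁻¹) (𝓝[<] t) (𝓝 (G t)) :=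
      h1.mul (h2.inv₀ (ne_of_gt hpos))
    have h4 : (fun u => Eβ u * (Eγ u)⁻¹) = F := funext hFval
    rw [h4] at h3
    exact tendsto_nhds_unique h3 (hFmono.tendsto_leftLim t)
  have hGF : G = Function.leftLim F := funext hG_eq
  have hGmono : Monotone G := by rw [hGF]; exact hFmono.leftLim
  have hGnn : ∀ t, 0 ≤ G t := by
    intro t
    rw [hG_eq t]
    exact le_trans (hFpos (t-1)).le (hFmono.le_leftLim (by linarith))
  have hGleF : ∀ t, G t ≤ F t := by
    intro t
    rw [hG_eq t]
    exact hFmono.leftLim_le le_rfl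
  -- integration facts
  have hInt : ∀ t1 t2 : ℝ, IntegrableOn G (Set.Ioc t1 t2) A.measure := fun t1 t2 =>
    ((hGmono.monotoneOn _).integrableOn_isCompact isCompact_Icc).mono_set
      Set.Ioc_subset_Icc_self
  set ψ : ℝ → ℝ := fun t => ∫ u in Set.Ioc (0:ℝ) t, G u ∂A.measure with hψdef
  have hψadd : ∀ t1 t2 : ℝ, 0 ≤ t1 → t1 ≤ t2 →
      ψ t2 = ψ t1 + ∫ u in Set.Ioc t1 t2, G u ∂A.measure := by
    intro t1 t2 h01 h12
    simp only [hψdef]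
    rw [← Set.Ioc_union_Ioc_eq_Ioc h01 h12,
      setIntegral_union (Set.Ioc_disjoint_Ioc_of_le le_rfl) measurableSet_Ioc (hInt 0 t1) (hInt t1 t2)]
  have hIbound : ∀ t1 t2 M : ℝ, t1 ≤ t2 → (∀ u ∈ Set.Ioc t1 t2, G u ≤ M) →
      (∫ u in Set.Ioc t1 t2, G u ∂A.measure) ≤ M * (A t2 - A t1) := by
    intro t1 t2 M h12 hM
    have hμ : A.measure (Set.Ioc t1 t2) = ENNReal.ofReal (A t2 - A t1) := A.measure_Ioc t1 t2
    have h1 : (∫ u in Set.Ioc t1 t2, G u ∂A.measure) ≤ ∫ _ in Set.Ioc t1 t2, M ∂A.measure := by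
      refine setIntegral_mono_on (hInt t1 t2) ?_ measurableSet_Ioc hM
      exact integrableOn_const (by rw [hμ]; exact ENNReal.ofReal_ne_top)
    rw [setIntegral_const, measureReal_def, hμ, smul_eq_mul,
      ENNReal.toReal_ofReal (sub_nonneg.2 (A.mono h12))] at h1
    exact h1.trans_eq (mul_comm _ _)
  -- main claim with epsilon
  have main : ∀ ε : ℝ, 0 < ε → c * ψ s ≤ (1 + ε) * (F s - 1) := by
    intro ε hε
    by_contra hcon
    set bad : Set ℝ := {t | t ∈ Set.Icc 0 s ∧ ¬(c * ψ t ≤ (1 + ε) * (F t - 1))} with hbad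
    have hsbad : s ∈ bad := ⟨⟨hs, le_rfl⟩, hcon⟩
    have hbadne : bad.Nonempty := ⟨s, hsbad⟩
    have hbdd : BddBelow bad := ⟨0, fun t ht => ht.1.1⟩
    set t0 := sInf bad with ht0def
    have ht00 : 0 ≤ t0 := le_csInf hbadne fun t ht => ht.1.1
    have ht0s : t0 ≤ s := csInf_le hbdd hsbad
    have hgood : ∀ r : ℝ, 0 ≤ r → r < t0 → c * ψ r ≤ (1 + ε) * (F r - 1) := by
      intro r hr0 hrt
      by_contra h
      exact absurd (csInf_le hbdd ⟨⟨hr0, hrt.le.trans ht0s⟩, h⟩) (not_le.2 hrt)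
    have hPt0 : c * ψ t0 ≤ (1 + ε) * (F t0 - 1) := by
      rcases eq_or_lt_of_le ht00 with h0 | h0
      · have hψ0 : ψ t0 = 0 := by
          simp only [hψdef, ← h0, Set.Ioc_self, setIntegral_empty]
        rw [hψ0, ← h0, hF0]
        simp
      · -- t0 > 0 : left limit argument
        have hLnn : 0 ≤ Function.leftLim F t0 :=
          le_trans (hFpos (t0-1)).le (hFmono.le_leftLim (by linarith))
        have hkeyr : ∀ r : ℝ, 0 ≤ r → r < t0 →
            c * ψ t0 ≤ (1 + ε) * (F r - 1)
              + c * Function.leftLim F t0 * (A t0 - A r) := by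
          intro r hr0 hrt
          have h1 := hψadd r t0 hr0 hrt.le
          have h2 : (∫ u in Set.Ioc r t0, G u ∂A.measure)
              ≤ Function.leftLim F t0 * (A t0 - A r) := by
            refine hIbound r t0 _ hrt.le ?_
            intro u hu
            rcases eq_or_lt_of_le hu.2 with h | h
            · rw [hG_eq u, h]
            · exact le_trans (hGleF u) (hFmono.le_leftLim h)
          have h3 := hgood r hr0 hrt
          have h1' : c * ψ t0 = c * ψ r + c * (∫ u in Set.Ioc r t0, G u ∂A.measure) := by
            rw [h1]; ring
          nlinarith [mul_le_mul_of_nonneg_left h2 hc0.le]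
        have hlim : Filter.Tendsto
            (fun r => (1 + ε) * (F r - 1) + c * Function.leftLim F t0 * (A t0 - A r))
            (𝓝[<] t0)
            (𝓝 ((1 + ε) * (Function.leftLim F t0 - 1)
              + c * Function.leftLim F t0 * (A t0 - Function.leftLim A t0))) := by
          apply Filter.Tendsto.add
          · exact (((hFmono.tendsto_leftLim t0).sub_const 1).const_mul _)
          · exact (tendsto_const_nhds.sub (A.mono.tendsto_leftLim t0)).const_mul _
        have hev : ∀ᶠ r in 𝓝[<] t0,
            c * ψ t0 ≤ (1 + ε) * (F r - 1) + c * Function.leftLim F t0 * (A t0 - A r) := by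
          filter_upwards [self_mem_nhdsWithin,
            ((eventually_gt_nhds h0).filter_mono nhdsWithin_le_nhds)] with r h1 h2
          exact hkeyr r h2.le h1
        have hlast := ge_of_tendsto hlim hev
        have hjump_ineq : Function.leftLim F t0
            * (1 + c * (A t0 - Function.leftLim A t0)) ≤ F t0 := by
          have hev2 : ∀ᶠ r in 𝓝[<] t0, F r * (1 + c * (A t0 - A r)) ≤ F t0 := by
            filter_upwards [self_mem_nhdsWithin,
              ((eventually_gt_nhds h0).filter_mono nhdsWithin_le_nhds)] with r h1 h2
            exact (hkey r t0 h2.le h1.le).1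
          have hlim2 : Filter.Tendsto (fun r => F r * (1 + c * (A t0 - A r))) (𝓝[<] t0)
              (𝓝 (Function.leftLim F t0 * (1 + c * (A t0 - Function.leftLim A t0)))) := by
            exact (hFmono.tendsto_leftLim t0).mul
              (((tendsto_const_nhds.sub (A.mono.tendsto_leftLim t0)).const_mul c).const_add 1)
          exact le_of_tendsto hlim2 hev2
        have hΔnn : 0 ≤ A t0 - Function.leftLim A t0 :=
          sub_nonneg.2 (A.mono.leftLim_le le_rfl)
        have e9 : Function.leftLim F t0 * (c * (A t0 - Function.leftLim A t0))
            ≤ F t0 - Function.leftLim F t0 := by nlinarith [hjump_ineq]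
        have e11 : 0 ≤ F t0 - Function.leftLim F t0 :=
          le_trans (mul_nonneg hLnn (mul_nonneg hc0.le hΔnn)) e9
        nlinarith [hlast, e9, e11, mul_nonneg hε.le e11]
    by_cases ht0bad : t0 ∈ bad
    · exact ht0bad.2 hPt0
    · have ht0lt : t0 < s := by
        rcases eq_or_lt_of_le ht0s with h | h
        · exact absurd (h ▸ hsbad) ht0bad
        · exact h
      have hη : 0 < Real.log (1 + ε) := Real.log_pos (by linarith)
      have hrc : Filter.Tendsto A (𝓝[>] t0) (𝓝 (A t0)) :=
        (A.right_continuous t0).mono_left (nhdsWithin_mono _ Set.Ioi_subset_Ici_self)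
      have hev3 : ∀ᶠ r in 𝓝[>] t0, A r < A t0 + Real.log (1 + ε) / (β - γ) := by
        apply hrc.eventually_lt_const
        have : 0 < Real.log (1 + ε) / (β - γ) := div_pos hη hK
        linarith
      have hev4 : ∀ᶠ r in 𝓝[>] t0, r < s :=
        (eventually_lt_nhds ht0lt).filter_mono nhdsWithin_le_nhds
      obtain ⟨t', ⟨ht'A, ht's⟩, ht'gt⟩ := ((hev3.and hev4).and self_mem_nhdsWithin).exists
      have ht'gt' : t0 < t' := ht'gt
      obtain ⟨x, hxbad, hxlt⟩ : ∃ x, x ∈ bad ∧ x < t' := by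
        by_contra hno
        push_neg at hno
        have : t' ≤ t0 := le_csInf hbadne fun b hb => hno b hb
        linarith
      have hxt0 : t0 ≤ x := csInf_le hbdd hxbad
      have hxt0' : t0 < x := lt_of_le_of_ne hxt0 fun h => ht0bad (h ▸ hxbad)
      refine hxbad.2 ?_
      have hx0 : 0 ≤ x := le_trans ht00 hxt0
      have hAx : A x - A t0 ≤ Real.log (1 + ε) / (β - γ) := by
        have := A.mono hxlt.le
        linarith
      have hδx0 : 0 ≤ A x - A t0 := sub_nonneg.2 (A.mono hxt0)
      have h1 := hψadd t0 x ht00 hxt0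
      have h2 : (∫ u in Set.Ioc t0 x, G u ∂A.measure) ≤ F x * (A x - A t0) := by
        refine hIbound t0 x _ hxt0 ?_
        intro u hu
        exact le_trans (hGleF u) (hFmono hu.2)
      have h3 := (hkey t0 x ht00 hxt0).1
      have h4 := (hkey t0 x ht00 hxt0).2
      have h5 : Real.exp ((β - γ) * (A x - A t0)) ≤ 1 + ε := by
        rw [← Real.exp_log (show (0:ℝ) < 1 + ε by linarith)]
        apply Real.exp_le_exp.2
        calc (β - γ) * (A x - A t0) ≤ (β - γ) * (Real.log (1 + ε) / (β - γ)) :=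
              mul_le_mul_of_nonneg_left hAx hK.le
          _ = Real.log (1 + ε) := by field_simp
      have hε1 : (0:ℝ) ≤ 1 + ε := by linarith
      have q1 : F x ≤ F t0 * (1 + ε) :=
        h4.trans (mul_le_mul_of_nonneg_left h5 (hFpos t0).le)
      have e1 : c * (F x * (A x - A t0)) ≤ (1 + ε) * (c * (F t0 * (A x - A t0))) := by
        nlinarith [mul_le_mul_of_nonneg_right q1 (mul_nonneg hc0.le hδx0)]
      have e2 : c * (F t0 * (A x - A t0)) ≤ F x - F t0 := by nlinarith [h3]
      have p1 : c * (∫ u in Set.Ioc t0 x, G u ∂A.measure) ≤ c * (F x * (A x - A t0)) :=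
        mul_le_mul_of_nonneg_left h2 hc0.le
      have p2 := mul_le_mul_of_nonneg_left e2 hε1
      have h1' : c * ψ x = c * ψ t0 + c * (∫ u in Set.Ioc t0 x, G u ∂A.measure) := by
        rw [h1]; ring
      nlinarith [hPt0, p1, e1, p2, h1']
  -- conclusion
  have hψs : c * ψ s ≤ F s - 1 := by
    have hk := (hkey 0 s le_rfl hs).1
    have hA2 : 0 ≤ A s - A 0 := sub_nonneg.2 (A.mono hs)
    rw [hF0] at hk
    have hFs1 : 0 ≤ F s - 1 := by nlinarith [mul_nonneg hc0.le hA2]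
    refine le_of_forall_pos_le_add ?_
    intro ε' hε'
    have hden2 : 0 < F s - 1 + 1 := by linarith
    have hq := main (ε' / (F s - 1 + 1)) (div_pos hε' hden2)
    have hqq : ε' / (F s - 1 + 1) * (F s - 1 + 1) = ε' := div_mul_cancel₀ _ (ne_of_gt hden2)
    have hq0 : 0 < ε' / (F s - 1 + 1) := div_pos hε' hden2
    nlinarith [hq, hqq, hFs1, hq0]
  have hψnn : 0 ≤ ψ s := setIntegral_nonneg measurableSet_Ioc fun u _ => hGnn u
  have hcinv : (1 + γ * Φ) / (β - γ) = c⁻¹ := by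
    rw [hcdef, inv_div]
  rw [hFval s, hcinv]
  show ψ s ≤ c⁻¹ * F s
  rw [inv_mul_eq_div, le_div_iff₀ hc0]
  nlinarith [hψs, hFpos s]
end

section
/- If ξ = (ξ_t)_{t∈[0,∞]} is a predictable process with respect to (G_t), then the left-limsup process ξ̄ defined by ξ̄_0 = ξ_0 and ξ̄_t = limsup_{s↑↑t} ξ_s for t > 0 is predictable with respect to the universally completed filtration (G^U_t). -/
open MeasureTheory Filter
open scoped ENNReal

open Set Topology

/-- The universal completion of a σ-algebra `m`: the sets that are null-measurable
with respect to every probability measure on `(Ω, m)`. -/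
def univCompletion {Ω : Type*} (m : MeasurableSpace Ω) : MeasurableSpace Ω where
  MeasurableSet' s := ∀ μ : @Measure Ω m, IsProbabilityMeasure μ →
    @NullMeasurableSet Ω m s μ
  measurableSet_empty := fun μ _ => (@MeasurableSet.empty Ω m).nullMeasurableSet
  measurableSet_compl := fun _ hs μ hμ => (hs μ hμ).compl
  measurableSet_iUnion := fun _ hf μ hμ => NullMeasurableSet.iUnion fun i => hf i μ hμ

/-- The predictable σ-algebra on `Ω × [0,∞]` associated with a family `G` of
σ-algebras: generated by the `G`-adapted processes with continuous paths. -/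
def predictableSigmaAlgebra {Ω : Type*} (G : ℝ≥0∞ → MeasurableSpace Ω) :
    MeasurableSpace (Ω × ℝ≥0∞) :=
  MeasurableSpace.generateFrom
    {s | ∃ X : ℝ≥0∞ → Ω → ℝ, (∀ t, @Measurable Ω ℝ (G t) _ (X t)) ∧
      (∀ ω, Continuous fun t => X t ω) ∧
      ∃ B : Set ℝ, MeasurableSet B ∧ s = {p : Ω × ℝ≥0∞ | X p.2 p.1 ∈ B}}


theorem analyticSet_nullMeasurableSet {X : Type*} [TopologicalSpace X] [PolishSpace X]
    [MeasurableSpace X] [BorelSpace X] {A : Set X} (hA : MeasureTheory.AnalyticSet A)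
    (μ : Measure X) [IsFiniteMeasure μ] : NullMeasurableSet A μ := by
  rw [MeasureTheory.AnalyticSet] at hA
  rcases hA with rfl | ⟨f, fc, rfl⟩
  · exact MeasurableSet.empty.nullMeasurableSet
  set A := range f with hA
  have key : ∀ ε : ℝ≥0∞, 0 < ε → ∃ K, IsCompact K ∧ K ⊆ A ∧ μ A ≤ μ K + ε := by
    intro ε hε
    rcases eq_or_ne ε ⊤ with rfl | hεtop
    · exact ⟨∅, isCompact_empty, empty_subset _, le_top.trans_eq (by simp)⟩
    set C : (ℕ → ℕ) → ℕ → Set (ℕ → ℕ) := fun σ k => {τ | ∀ i, i < k → τ i ≤ σ i} with hC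
    have hCupdate : ∀ (σ : ℕ → ℕ) (k m : ℕ),
        C (Function.update σ k m) (k + 1) = C σ k ∩ {τ | τ k ≤ m} := by
      intro σ k m
      ext τ
      simp only [hC, mem_setOf_eq, mem_inter_iff]
      constructor
      · intro h
        refine ⟨fun i hi => ?_, ?_⟩
        · have := h i (by omega)
          rwa [Function.update_of_ne (by omega)] at this
        · have := h k (by omega)
          rwa [Function.update_self] at this
      · rintro ⟨h1, h2⟩ i hi
        rcases eq_or_ne i k with rfl | hik
        · rwa [Function.update_self]
        · rw [Function.update_of_ne hik]; exact h1 i (by omega)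
    have step : ∀ (σ : ℕ → ℕ) (k : ℕ), ∃ m : ℕ,
        μ (f '' C σ k) ≤ μ (f '' C (Function.update σ k m) (k + 1)) + ε / 2 ^ (k + 1) := by
      intro σ k
      have hUnion : (⋃ m : ℕ, (C σ k ∩ {τ | τ k ≤ m})) = C σ k := by
        ext τ
        simp only [mem_iUnion, mem_inter_iff, mem_setOf_eq]
        exact ⟨fun ⟨m, h, _⟩ => h, fun h => ⟨τ k, h, le_rfl⟩⟩
      have hmono : Monotone fun m : ℕ => f '' (C σ k ∩ {τ | τ k ≤ m}) := by
        intro a b hab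
        exact image_mono (inter_subset_inter_right _ fun τ hτ => le_trans hτ (by exact_mod_cast hab))
      have hsup : μ (f '' C σ k) = ⨆ m : ℕ, μ (f '' (C σ k ∩ {τ | τ k ≤ m})) := by
        rw [← hmono.measure_iUnion, ← image_iUnion, hUnion]
      by_contra hcon
      push_neg at hcon
      have hcon' : ∀ m : ℕ, μ (f '' (C σ k ∩ {τ | τ k ≤ m})) + ε / 2 ^ (k + 1) < μ (f '' C σ k) := by
        intro m
        have := hcon m
        rwa [hCupdate σ k m] at this
      have hne : μ (f '' C σ k) ≠ 0 := by
        intro h0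
        exact absurd (hcon' 0) (by simp [h0])
      have hfin : μ (f '' C σ k) ≠ ∞ := measure_ne_top μ _
      have hδ : ε / 2 ^ (k + 1) ≠ 0 := by
        simp only [ne_eq, ENNReal.div_eq_zero_iff, not_or]
        exact ⟨hε.ne', by simp⟩
      have hle : μ (f '' C σ k) ≤ μ (f '' C σ k) - ε / 2 ^ (k + 1) := by
        conv_lhs => rw [hsup]
        refine iSup_le fun m => ?_
        exact ENNReal.le_sub_of_add_le_right (by simp [ENNReal.div_eq_top, hεtop]) (hcon' m).le
      have hlt : μ (f '' C σ k) - ε / 2 ^ (k + 1) < μ (f '' C σ k) :=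
        ENNReal.sub_lt_self hfin hne hδ
      exact absurd (lt_of_le_of_lt hle hlt) (lt_irrefl _)
    -- recursive construction of σ
    let F : ℕ → (ℕ → ℕ) := fun k => Nat.rec (fun _ => 0)
      (fun k Fk => Function.update Fk k (step Fk k).choose) k
    have hF : ∀ k, F (k + 1) = Function.update (F k) k (step (F k) k).choose := fun k => rfl
    set σ : ℕ → ℕ := fun k => F (k + 1) k with hσ
    have hFpre : ∀ k i, i < k → F k i = σ i := by
      intro k
      induction k with
      | zero => omega
      | succ k ih =>
        intro i hi
        rcases eq_or_ne i k with rfl | hik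
        · rfl
        · have hik' : i < k := by omega
          calc F (k + 1) i = F k i := by rw [hF k, Function.update_of_ne hik]
          _ = σ i := ih i hik'
    have hCF : ∀ k, C (F k) k = C σ k := by
      intro k
      ext τ
      simp only [hC, mem_setOf_eq]
      exact ⟨fun h i hi => by rw [← hFpre k i hi]; exact h i hi,
             fun h i hi => by rw [hFpre k i hi]; exact h i hi⟩
    have hstep' : ∀ k, μ (f '' C σ k) ≤ μ (f '' C σ (k + 1)) + ε / 2 ^ (k + 1) := by
      intro k
      obtain ⟨m0, h1, h2⟩ : ∃ m, (μ (f '' C (F k) k) ≤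
          μ (f '' C (Function.update (F k) k m) (k + 1)) + ε / 2 ^ (k + 1)) ∧
          Function.update (F k) k m = F (k + 1) :=
        ⟨(step (F k) k).choose, (step (F k) k).choose_spec, (hF k).symm⟩
      rw [hCF k, h2, hCF (k + 1)] at h1
      exact h1
    have hIneq0 : ∀ k, μ A ≤ μ (f '' C σ k) + ∑ i ∈ Finset.range k, ε / 2 ^ (i + 1) := by
      intro k
      induction k with
      | zero =>
        simp only [Finset.range_zero, Finset.sum_empty, add_zero]
        have h0 : C σ 0 = univ := by ext τ; simp [hC]
        rw [h0, image_univ]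
      | succ k ih =>
        calc μ A ≤ μ (f '' C σ k) + ∑ i ∈ Finset.range k, ε / 2 ^ (i + 1) := ih
        _ ≤ (μ (f '' C σ (k + 1)) + ε / 2 ^ (k + 1)) + ∑ i ∈ Finset.range k, ε / 2 ^ (i + 1) :=
            add_le_add_left (hstep' k) _
        _ = μ (f '' C σ (k + 1)) + ∑ i ∈ Finset.range (k + 1), ε / 2 ^ (i + 1) := by
            rw [Finset.sum_range_succ]; ring
    have hsum : ∀ k : ℕ, (∑ i ∈ Finset.range k, ε / 2 ^ (i + 1)) + ε / 2 ^ k = ε := by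
      intro k
      induction k with
      | zero => simp
      | succ k ih =>
        have h2 : ε / 2 ^ (k + 1) + ε / 2 ^ (k + 1) = ε / 2 ^ k := by
          have he : ε / 2 ^ (k + 1) = ε / 2 ^ k / 2 := by
            rw [pow_succ, div_eq_mul_inv, div_eq_mul_inv, div_eq_mul_inv,
              ENNReal.mul_inv (Or.inr (by norm_num)) (Or.inr (by norm_num)), mul_assoc]
          rw [he, ENNReal.add_halves]
        rw [Finset.sum_range_succ, add_assoc, h2, ih]
    have hIneq : ∀ k, μ A ≤ μ (f '' C σ k) + ε := by
      intro k
      refine (hIneq0 k).trans (add_le_add_right ?_ _)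
      calc (∑ i ∈ Finset.range k, ε / 2 ^ (i + 1))
          ≤ (∑ i ∈ Finset.range k, ε / 2 ^ (i + 1)) + ε / 2 ^ k := le_self_add
      _ = ε := hsum k
    -- the compact set
    set Cinf : Set (ℕ → ℕ) := univ.pi fun i => Iic (σ i) with hCinf
    have hCinfC : IsCompact Cinf := isCompact_univ_pi fun i => (finite_Iic _).isCompact
    refine ⟨f '' Cinf, hCinfC.image fc, image_subset_range f _, ?_⟩
    set D : ℕ → Set X := fun k => closure (f '' C σ k) with hD
    have hDanti : Antitone D := by
      intro a b hab
      exact closure_mono (image_mono fun τ hτ i hi => hτ i (lt_of_lt_of_le hi hab))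
    have hDlim : Tendsto (μ ∘ D) atTop (𝓝 (μ (⋂ k, D k))) :=
      tendsto_measure_iInter_atTop
        (fun k => isClosed_closure.measurableSet.nullMeasurableSet)
        hDanti ⟨0, measure_ne_top μ _⟩
    have hμA : μ A ≤ μ (⋂ k, D k) + ε := by
      refine ge_of_tendsto' (hDlim.add (tendsto_const_nhds : Tendsto (fun _ : ℕ => ε) atTop (𝓝 ε))) fun k => ?_
      exact (hIneq k).trans (add_le_add_left (measure_mono subset_closure) _)
    refine hμA.trans (add_le_add_left (measure_mono ?_) _)
    -- ⋂ k, D k ⊆ f '' Cinf : diagonal argument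
    letI := TopologicalSpace.upgradeIsCompletelyMetrizable X
    intro x hx
    have sel : ∀ k : ℕ, ∃ τ, τ ∈ C σ k ∧ dist (f τ) x < 1 / (k + 1) := by
      intro k
      have hxk : x ∈ D k := mem_iInter.1 hx k
      rcases Metric.mem_closure_iff.1 hxk (1 / (k + 1)) (by positivity) with ⟨y, hy, hxy⟩
      rcases hy with ⟨τ, hτ, rfl⟩
      exact ⟨τ, hτ, by rwa [dist_comm]⟩
    choose τ hτC hτd using sel
    set M : ℕ → ℕ := fun i => max (σ i) (Finset.sup (Finset.range (i + 2)) fun k => τ k i) with hM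
    have hτT : ∀ k, τ k ∈ univ.pi fun i => Iic (M i) := by
      intro k i _
      rcases le_or_gt k (i + 1) with h | h
      · exact le_trans (Finset.le_sup (f := fun k => τ k i)
          (Finset.mem_range.2 (by omega))) (le_max_right _ _)
      · exact le_max_of_le_left (hτC k i (by omega))
    have hT : IsCompact (univ.pi fun i : ℕ => Iic (M i)) :=
      isCompact_univ_pi fun i => (finite_Iic _).isCompact
    rcases hT.tendsto_subseq hτT with ⟨τl, hτlT, φ, hφ, hconv⟩
    have hτlC : τl ∈ Cinf := by
      intro i _
      have hti : Tendsto (fun k => τ (φ k) i) atTop (𝓝 (τl i)) :=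
        ((continuous_apply i).tendsto τl).comp hconv
      rw [nhds_discrete, tendsto_pure] at hti
      rcases (hti.and (eventually_gt_atTop i)).exists with ⟨k, hk1, hk2⟩
      rw [← hk1]
      exact hτC (φ k) i (lt_of_lt_of_le hk2 (hφ.le_apply))
    have hflim : Tendsto (fun k => f (τ (φ k))) atTop (𝓝 (f τl)) :=
      (fc.tendsto τl).comp hconv
    have hflim2 : Tendsto (fun k => f (τ (φ k))) atTop (𝓝 x) := by
      rw [tendsto_iff_dist_tendsto_zero]
      refine squeeze_zero (fun k => dist_nonneg) (fun k => (hτd (φ k)).le.trans ?_)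
        tendsto_one_div_add_atTop_nhds_zero_nat
      have h1 : ((k : ℝ) + 1) ≤ (φ k : ℝ) + 1 := by
        exact_mod_cast Nat.succ_le_succ hφ.le_apply
      exact one_div_le_one_div_of_le (by positivity) h1
    have : f τl = x := tendsto_nhds_unique hflim hflim2
    exact ⟨τl, hτlC, this⟩
  -- conclude null measurability
  choose K hKc hKA hKμ using fun n : ℕ => key (1 / (n + 1))
    (ENNReal.div_pos one_ne_zero (by simp))
  set S : Set X := ⋃ n, K n with hS
  have hSm : MeasurableSet S := MeasurableSet.iUnion fun n => (hKc n).isClosed.measurableSet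
  have hSA : S ⊆ A := iUnion_subset hKA
  have hAS : μ A ≤ μ S := by
    refine ENNReal.le_of_forall_pos_le_add fun δ hδ _ => ?_
    rcases ENNReal.exists_inv_nat_lt (show (δ : ℝ≥0∞) ≠ 0 by exact_mod_cast hδ.ne') with ⟨n, hn⟩
    refine (hKμ n).trans (add_le_add (measure_mono (subset_iUnion K n)) ?_)
    calc (1 : ℝ≥0∞) / (n + 1) ≤ (n : ℝ≥0∞)⁻¹ := by
          rw [one_div]
          exact ENNReal.inv_le_inv.2 (by simp)
    _ ≤ δ := hn.le
  have hnull : μ (toMeasurable μ A \ S) = 0 := by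
    rw [measure_diff (hSA.trans (subset_toMeasurable μ A)) hSm.nullMeasurableSet
      (measure_ne_top μ S), measure_toMeasurable]
    exact tsub_eq_zero_of_le hAS
  have hAeq : A = S ∪ (A ∩ (toMeasurable μ A \ S)) := by
    apply Subset.antisymm
    · intro a ha
      by_cases h : a ∈ S
      · exact Or.inl h
      · exact Or.inr ⟨ha, subset_toMeasurable μ A ha, h⟩
    · exact union_subset hSA inter_subset_left
  rw [hAeq]
  exact hSm.nullMeasurableSet.union
    (NullMeasurableSet.of_null (measure_mono_null inter_subset_right hnull))

theorem le_univCompletion {Ω : Type*} (m : MeasurableSpace Ω) : m ≤ univCompletion m :=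
  fun _s hs => fun _μ _ => hs.nullMeasurableSet

theorem univCompletion_mono {Ω : Type*} {m₁ m₂ : MeasurableSpace Ω} (h : m₁ ≤ m₂) :
    univCompletion m₁ ≤ univCompletion m₂ := by
  intro s hs μ hμ
  have hμ' : @IsProbabilityMeasure Ω m₁ (μ.trim h) := by
    constructor
    rw [trim_measurableSet_eq h MeasurableSet.univ]
    exact hμ.measure_univ
  obtain ⟨t, -, htm, hae⟩ := (hs (μ.trim h) hμ').exists_measurable_superset_ae_eq
  exact ⟨t, h t htm, (ae_eq_of_ae_eq_trim hae.symm)⟩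

theorem measurableSet_generateFrom_countable {α : Type*} {C : Set (Set α)} {S : Set α}
    (hS : MeasurableSet[MeasurableSpace.generateFrom C] S) :
    ∃ D : Set (Set α), D ⊆ C ∧ D.Countable ∧
      MeasurableSet[MeasurableSpace.generateFrom D] S := by
  let M : MeasurableSpace α :=
    { MeasurableSet' := fun s => ∃ D : Set (Set α), D ⊆ C ∧ D.Countable ∧
        MeasurableSet[MeasurableSpace.generateFrom D] s
      measurableSet_empty := ⟨∅, empty_subset _, countable_empty, @MeasurableSet.empty _ (MeasurableSpace.generateFrom ∅)⟩
      measurableSet_compl := by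
        rintro s ⟨D, h1, h2, h3⟩
        exact ⟨D, h1, h2, h3.compl⟩
      measurableSet_iUnion := by
        intro g hg
        choose D h1 h2 h3 using hg
        refine ⟨⋃ i, D i, iUnion_subset h1, countable_iUnion h2,
          MeasurableSet.iUnion fun i => ?_⟩
        exact MeasurableSpace.generateFrom_mono (subset_iUnion D i) _ (h3 i) }
  have hle : MeasurableSpace.generateFrom C ≤ M :=
    MeasurableSpace.generateFrom_le fun s hs =>
      ⟨{s}, singleton_subset_iff.2 hs, countable_singleton s,
        MeasurableSpace.measurableSet_generateFrom (Set.mem_singleton s)⟩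
  exact hle S hS

theorem projection_nullMeasurable {Ω : Type*} (mΩ : MeasurableSpace Ω)
    (S : Set (Ω × ℝ≥0∞)) (hS : MeasurableSet[mΩ.prod (inferInstance : MeasurableSpace ℝ≥0∞)] S) :
    MeasurableSet[univCompletion mΩ] {ω | ∃ s : ℝ≥0∞, (ω, s) ∈ S} := by
  classical
  -- the product σ-algebra is generated by preimage sets
  set C : Set (Set (Ω × ℝ≥0∞)) :=
    {s | ∃ A : Set Ω, MeasurableSet[mΩ] A ∧ Prod.fst ⁻¹' A = s} ∪
    {s | ∃ B : Set ℝ≥0∞, MeasurableSet B ∧ Prod.snd ⁻¹' B = s} with hCdef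
  have hgen : mΩ.prod (inferInstance : MeasurableSpace ℝ≥0∞) = MeasurableSpace.generateFrom C := by
    apply le_antisymm
    · refine sup_le ?_ ?_
      · intro s hs
        obtain ⟨A, hA, rfl⟩ := MeasurableSpace.measurableSet_comap.1 hs
        exact MeasurableSpace.measurableSet_generateFrom (Or.inl ⟨A, hA, rfl⟩)
      · intro s hs
        obtain ⟨B, hB, rfl⟩ := MeasurableSpace.measurableSet_comap.1 hs
        exact MeasurableSpace.measurableSet_generateFrom (Or.inr ⟨B, hB, rfl⟩)
    · refine MeasurableSpace.generateFrom_le fun s hs => ?_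
      rcases hs with ⟨A, hA, rfl⟩ | ⟨B, hB, rfl⟩
      · exact le_sup_left (α := MeasurableSpace (Ω × ℝ≥0∞)) _
          (MeasurableSpace.measurableSet_comap.2 ⟨A, hA, rfl⟩)
      · exact le_sup_right (α := MeasurableSpace (Ω × ℝ≥0∞)) _
          (MeasurableSpace.measurableSet_comap.2 ⟨B, hB, rfl⟩)
  rw [hgen] at hS
  obtain ⟨D, hDC, hDcount, hSD⟩ := measurableSet_generateFrom_countable hS
  -- make D nonempty
  set D' : Set (Set (Ω × ℝ≥0∞)) := insert ∅ D with hD'def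
  have hD'C : D' ⊆ C := insert_subset (Or.inl ⟨∅, MeasurableSet.empty, by simp⟩) hDC
  have hSD' : MeasurableSet[MeasurableSpace.generateFrom D'] S :=
    MeasurableSpace.generateFrom_mono (subset_insert _ _) _ hSD
  obtain ⟨e, he⟩ := (hDcount.insert ∅).exists_eq_range (insert_nonempty _ _)
  have heC : ∀ n, e n ∈ C := by
    intro n
    apply hD'C
    rw [hD'def, he]
    exact mem_range_self n
  set P : ℕ → Prop := fun n => ∃ A : Set Ω, MeasurableSet[mΩ] A ∧ Prod.fst ⁻¹' A = e n with hPdef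
  set A : ℕ → Set Ω := fun n => if h : P n then h.choose else ∅ with hAdef
  have hAm : ∀ n, MeasurableSet[mΩ] (A n) := by
    intro n
    simp only [hAdef]
    split_ifs with h
    · exact h.choose_spec.1
    · exact MeasurableSet.empty
  set Q : ℕ → Prop := fun n => ∃ B : Set ℝ≥0∞, MeasurableSet B ∧ Prod.snd ⁻¹' B = e n with hQdef
  set B : ℕ → Set ℝ≥0∞ := fun n => if h : Q n then h.choose else ∅ with hBdef
  have hBm : ∀ n, MeasurableSet (B n) := by
    intro n
    simp only [hBdef]
    split_ifs with h
    · exact h.choose_spec.1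
    · exact MeasurableSet.empty
  set h : Ω → ℕ → Bool := fun ω n => if ω ∈ A n then true else false with hhdef
  have hmeas : Measurable[mΩ] h := by
    refine measurable_pi_lambda h fun n => ?_
    exact Measurable.ite (hAm n) measurable_const measurable_const
  set E' : ℕ → Set ((ℕ → Bool) × ℝ≥0∞) := fun n =>
    if P n then {x | x.1 n = true} else Prod.snd ⁻¹' (B n) with hE'def
  have hE'm : ∀ n, MeasurableSet (E' n) := by
    intro n
    simp only [hE'def]
    split_ifs with hP
    · have hrw : {x : (ℕ → Bool) × ℝ≥0∞ | x.1 n = true}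
          = (fun x : (ℕ → Bool) × ℝ≥0∞ => x.1 n) ⁻¹' {true} := rfl
      rw [hrw]
      exact ((measurable_pi_apply n).comp measurable_fst) (measurableSet_singleton true)
    · exact measurable_snd (hBm n)
  have hpre : ∀ n, (fun p : Ω × ℝ≥0∞ => (h p.1, p.2)) ⁻¹' (E' n) = e n := by
    intro n
    by_cases hP : P n
    · have hAn : Prod.fst ⁻¹' (A n) = e n := by
        simp only [hAdef, dif_pos hP]; exact hP.choose_spec.2
      simp only [hE'def, if_pos hP]
      rw [← hAn]
      ext p
      simp only [mem_preimage, mem_setOf_eq, hhdef]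
      split_ifs with hmem
      · simpa using hmem
      · simpa using hmem
    · have hQn : Q n := by
        rcases heC n with ⟨A', hA', hA'e⟩ | hq
        · exact absurd ⟨A', hA', hA'e⟩ hP
        · exact hq
      have hBn : Prod.snd ⁻¹' (B n) = e n := by
        simp only [hBdef, dif_pos hQn]; exact hQn.choose_spec.2
      simp only [hE'def, if_neg hP]
      rw [← hBn]
      rfl
  -- S is a preimage of a Borel set
  have hcom : MeasurableSet[MeasurableSpace.comap (fun p : Ω × ℝ≥0∞ => (h p.1, p.2))
      inferInstance] S := by
    refine MeasurableSpace.generateFrom_le (fun s hs => ?_) S hSD'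
    rw [hD'def, he] at hs
    obtain ⟨n, rfl⟩ := hs
    exact MeasurableSpace.measurableSet_comap.2 ⟨E' n, hE'm n, hpre n⟩
  obtain ⟨S', hS'm, hS'pre⟩ := MeasurableSpace.measurableSet_comap.1 hcom
  -- projection identity
  have hproj : {ω | ∃ s : ℝ≥0∞, (ω, s) ∈ S} = h ⁻¹' (Prod.fst '' S') := by
    ext ω
    simp only [mem_setOf_eq, mem_preimage, mem_image]
    constructor
    · rintro ⟨s, hs⟩
      rw [← hS'pre] at hs
      exact ⟨(h ω, s), hs, rfl⟩
    · rintro ⟨⟨x1, x2⟩, hx, hx1⟩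
      have hx1' : x1 = h ω := hx1
      subst hx1'
      refine ⟨x2, ?_⟩
      rw [← hS'pre]
      exact hx
  have hanalytic : MeasureTheory.AnalyticSet (Prod.fst '' S') :=
    hS'm.analyticSet_image measurable_fst
  intro μ hμ
  rw [hproj]
  set ν : Measure (ℕ → Bool) := @Measure.map Ω (ℕ → Bool) mΩ _ h μ with hνdef
  haveI hνp : IsProbabilityMeasure ν := by
    rw [hνdef]
    exact @Measure.isProbabilityMeasure_map Ω (ℕ → Bool) mΩ _ μ hμ h
      (@Measurable.aemeasurable Ω (ℕ → Bool) mΩ _ h μ hmeas)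
  haveI : PolishSpace (ℕ → Bool) := by
    haveI : TopologicalSpace.SeparableSpace (ℕ → Bool) := inferInstance
    haveI : TopologicalSpace.IsCompletelyMetrizableSpace (ℕ → Bool) := inferInstance
    infer_instance
  have hnull : NullMeasurableSet (Prod.fst '' S') ν :=
    analyticSet_nullMeasurableSet hanalytic ν
  obtain ⟨t, -, htm, hae⟩ := hnull.exists_measurable_superset_ae_eq
  refine ⟨h ⁻¹' t, hmeas htm, ?_⟩
  have h1 : ν ((Prod.fst '' S') \ t) = 0 ∧ ν (t \ (Prod.fst '' S')) = 0 :=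
    ae_eq_set.1 hae.symm
  refine ae_eq_set.2 ⟨?_, ?_⟩
  · rw [← preimage_diff]
    exact le_antisymm (le_trans (@Measure.le_map_apply Ω (ℕ → Bool) mΩ _ μ h
      (@Measurable.aemeasurable Ω (ℕ → Bool) mΩ _ h μ hmeas) _) (le_of_eq h1.1)) zero_le
  · rw [← preimage_diff]
    exact le_antisymm (le_trans (@Measure.le_map_apply Ω (ℕ → Bool) mΩ _ μ h
      (@Measurable.aemeasurable Ω (ℕ → Bool) mΩ _ h μ hmeas) _) (le_of_eq h1.2)) zero_le

theorem measurable_eval_pred {Ω : Type*} (G : ℝ≥0∞ → MeasurableSpace Ω)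
    (X : ℝ≥0∞ → Ω → ℝ) (hXa : ∀ t, @Measurable Ω ℝ (G t) _ (X t))
    (hXc : ∀ ω, Continuous fun t => X t ω) :
    @Measurable (Ω × ℝ≥0∞) ℝ (predictableSigmaAlgebra G) _ (fun p => X p.2 p.1) := by
  intro B hB
  exact MeasurableSpace.measurableSet_generateFrom ⟨X, hXa, hXc, B, hB, rfl⟩

theorem pred_restrict {Ω : Type*} (G : ℝ≥0∞ → MeasurableSpace Ω) (hG_mono : Monotone G)
    (r : ℝ≥0∞) {S : Set (Ω × ℝ≥0∞)}
    (hS : MeasurableSet[predictableSigmaAlgebra G] S) :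
    MeasurableSet[(G r).prod inferInstance] (S ∩ (Set.univ ×ˢ Set.Iic r)) := by
  letI : MeasurableSpace Ω := G r
  have hR : MeasurableSet (Set.univ ×ˢ Set.Iic r : Set (Ω × ℝ≥0∞)) :=
    MeasurableSet.univ.prod measurableSet_Iic
  let Q : MeasurableSpace (Ω × ℝ≥0∞) :=
    { MeasurableSet' := fun s =>
        MeasurableSet[(G r).prod inferInstance] (s ∩ (Set.univ ×ˢ Set.Iic r))
      measurableSet_empty := by simpa using (@MeasurableSet.empty (Ω × ℝ≥0∞) _)
      measurableSet_compl := by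
        intro s hs
        have hid : sᶜ ∩ (Set.univ ×ˢ Set.Iic r) =
            (Set.univ ×ˢ Set.Iic r) \ (s ∩ (Set.univ ×ˢ Set.Iic r)) := by
          ext p
          simp only [Set.mem_inter_iff, Set.mem_compl_iff, Set.mem_diff]
          tauto
        rw [hid]
        exact hR.diff hs
      measurableSet_iUnion := by
        intro g hg
        rw [Set.iUnion_inter]
        exact MeasurableSet.iUnion hg }
  have hle : predictableSigmaAlgebra G ≤ Q := by
    refine MeasurableSpace.generateFrom_le fun s hs => ?_
    obtain ⟨X, hXa, hXc, B, hB, rfl⟩ := hs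
    show MeasurableSet[(G r).prod inferInstance] _
    let X' : ℝ≥0∞ → Ω → ℝ := fun t ω => X (min t r) ω
    have hX'a : ∀ t, Measurable (X' t) := fun t =>
      (hXa (min t r)).mono (hG_mono (min_le_right t r)) le_rfl
    have hX'c : ∀ ω, Continuous fun t => X' t ω := fun ω =>
      (hXc ω).comp (continuous_id.min continuous_const)
    have hj : Measurable (Function.uncurry X') :=
      measurable_uncurry_of_continuous_of_measurable hX'c hX'a
    have key : {p : Ω × ℝ≥0∞ | X p.2 p.1 ∈ B} ∩ (Set.univ ×ˢ Set.Iic r) =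
        ((fun p : Ω × ℝ≥0∞ => Function.uncurry X' (p.2, p.1)) ⁻¹' B) ∩
          (Set.univ ×ˢ Set.Iic r) := by
      ext p
      simp only [Set.mem_inter_iff, Set.mem_setOf_eq, Set.mem_preimage, Set.mem_prod,
        Set.mem_univ, true_and, Set.mem_Iic, Function.uncurry]
      constructor
      · rintro ⟨h1, h2⟩
        refine ⟨?_, h2⟩
        show X (min p.2 r) p.1 ∈ B
        rwa [min_eq_left h2]
      · rintro ⟨h1, h2⟩
        refine ⟨?_, h2⟩
        have : X (min p.2 r) p.1 ∈ B := h1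
        rwa [min_eq_left h2] at this
    rw [key]
    exact ((hj.comp measurable_swap) hB).inter hR
  exact hle S hS

theorem sup_univ_measurable {Ω : Type*} (G : ℝ≥0∞ → MeasurableSpace Ω) (hG_mono : Monotone G)
    (ζ : ℝ≥0∞ → Ω → ℝ≥0∞)
    (hζ : @Measurable (Ω × ℝ≥0∞) ℝ≥0∞ (predictableSigmaAlgebra G) _ (fun p => ζ p.2 p.1))
    (u v : ℝ≥0∞) :
    @Measurable Ω ℝ≥0∞ (univCompletion (G v)) _
      (fun ω => ⨆ s ∈ Set.Ioc u v, ζ s ω) := by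
  have hprod : ∀ a : ℝ≥0∞, MeasurableSet[(G v).prod inferInstance]
      (({p : Ω × ℝ≥0∞ | a < ζ p.2 p.1} ∩ (Set.univ ×ˢ Set.Iic v)) ∩
        {p : Ω × ℝ≥0∞ | p.2 ∈ Set.Ioc u v}) := by
    intro a
    letI : MeasurableSpace Ω := G v
    refine MeasurableSet.inter ?_ (measurable_snd measurableSet_Ioc)
    exact pred_restrict G hG_mono v (hζ measurableSet_Ioi)
  letI : MeasurableSpace Ω := univCompletion (G v)
  apply measurable_of_Ioi
  intro a
  have hset : (fun ω => ⨆ s ∈ Set.Ioc u v, ζ s ω) ⁻¹' (Set.Ioi a) =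
      {ω | ∃ s : ℝ≥0∞, (ω, s) ∈
        (({p : Ω × ℝ≥0∞ | a < ζ p.2 p.1} ∩ (Set.univ ×ˢ Set.Iic v)) ∩
          {p : Ω × ℝ≥0∞ | p.2 ∈ Set.Ioc u v})} := by
    ext ω
    simp only [Set.mem_preimage, Set.mem_Ioi, Set.mem_setOf_eq, Set.mem_inter_iff,
      Set.mem_prod, Set.mem_univ, true_and, Set.mem_Iic, lt_iSup_iff]
    constructor
    · rintro ⟨s, hs, ha⟩
      exact ⟨s, ⟨⟨ha, hs.2⟩, hs⟩⟩
    · rintro ⟨s, ⟨⟨ha, _⟩, hs⟩⟩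
      exact ⟨s, hs, ha⟩
  rw [hset]
  exact projection_nullMeasurable (G v) _ (hprod a)

section Blocks
variable {Ω : Type*} (G' : ℝ≥0∞ → MeasurableSpace Ω)

theorem block_measurable (hmono : Monotone G') (u : ℝ≥0∞) (f : Ω → ℝ)
    (hf : @Measurable Ω ℝ (G' u) _ f) :
    @Measurable (Ω × ℝ≥0∞) ℝ (predictableSigmaAlgebra G') _
      (fun p => f p.1 * (Set.Ioi u).indicator (fun _ => (1 : ℝ)) p.2) := by
  rcases eq_or_ne u ⊤ with rfl | hu
  · have : (fun p : Ω × ℝ≥0∞ => f p.1 * (Set.Ioi ⊤).indicator (fun _ => (1 : ℝ)) p.2) =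
        fun _ => 0 := by
      funext p
      simp [Set.indicator_apply, not_top_lt]
    rw [this]
    exact measurable_const
  letI : MeasurableSpace (Ω × ℝ≥0∞) := predictableSigmaAlgebra G'
  -- continuous ramps
  have hc1 : (u + 1 : ℝ≥0∞) ≠ ⊤ := ENNReal.add_ne_top.2 ⟨hu, ENNReal.one_ne_top⟩
  set ψ : ℝ≥0∞ → ℝ := fun t => (min t (u + 1)).toReal with hψdef
  have hψcont : Continuous ψ := by
    refine ENNReal.continuousOn_toReal.comp_continuous (continuous_id.min continuous_const) ?_
    intro t
    simp only [Set.mem_setOf_eq, ne_eq]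
    exact ne_top_of_le_ne_top hc1 (min_le_right _ _)
  set φ : ℕ → ℝ≥0∞ → ℝ := fun m t => min 1 (max 0 ((m : ℝ) * (ψ t - u.toReal))) with hφdef
  have hφcont : ∀ m, Continuous (φ m) :=
    fun m => continuous_const.min (continuous_const.max ((continuous_const.mul
      (hψcont.sub continuous_const))))
  have hφvanish : ∀ m t, t ≤ u → φ m t = 0 := by
    intro m t ht
    have h1 : ψ t ≤ u.toReal := by
      rw [hψdef]
      exact ENNReal.toReal_mono hu (le_trans (min_le_left _ _) ht)
    have h2 : (m : ℝ) * (ψ t - u.toReal) ≤ 0 :=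
      mul_nonpos_of_nonneg_of_nonpos (Nat.cast_nonneg m) (by linarith)
    simp only [hφdef]
    rw [max_eq_left h2, min_eq_right zero_le_one]
  have hφtend : ∀ t, u < t → Filter.Tendsto (fun m => φ m t) Filter.atTop (nhds 1) := by
    intro t ht
    have hlt : u < min t (u + 1) := lt_min ht (ENNReal.lt_add_right hu one_ne_zero)
    have h1 : u.toReal < ψ t := by
      rw [hψdef]
      exact ENNReal.toReal_strict_mono (ne_top_of_le_ne_top hc1 (min_le_right _ _)) hlt
    have hr : 0 < ψ t - u.toReal := by linarith
    have hev : (fun m : ℕ => φ m t) =ᶠ[Filter.atTop] fun _ => 1 := by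
      filter_upwards [Filter.eventually_ge_atTop ⌈1 / (ψ t - u.toReal)⌉₊] with m hm
      have h2 : 1 / (ψ t - u.toReal) ≤ (m : ℝ) :=
        le_trans (Nat.le_ceil _) (by exact_mod_cast hm)
      have h3 : (1 : ℝ) ≤ m * (ψ t - u.toReal) := by
        rw [div_le_iff₀ hr] at h2
        linarith
      simp only [hφdef]
      rw [max_eq_right (by nlinarith), min_eq_left h3]
    exact Filter.Tendsto.congr' hev.symm tendsto_const_nhds
  have hX : ∀ m, @Measurable (Ω × ℝ≥0∞) ℝ (predictableSigmaAlgebra G') _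
      (fun p => f p.1 * φ m p.2) := by
    intro m
    refine measurable_eval_pred G' (fun t ω => f ω * φ m t) (fun t => ?_) (fun ω => ?_)
    · by_cases ht : t ≤ u
      · simp only [hφvanish m t ht, mul_zero]
        exact measurable_const
      · exact (hf.mono (hmono (not_le.1 ht).le) le_rfl).mul_const _
    · exact continuous_const.mul (hφcont m)
  refine measurable_of_tendsto_metrizable hX ?_
  rw [tendsto_pi_nhds]
  intro p
  by_cases hp : u < p.2
  · have : (Set.Ioi u).indicator (fun _ => (1 : ℝ)) p.2 = 1 := by
      simp [Set.indicator_apply, hp]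
    rw [this]
    simpa using (hφtend p.2 hp).const_mul (f p.1)
  · have h0 : (Set.Ioi u).indicator (fun _ => (1 : ℝ)) p.2 = 0 := by
      simp [Set.indicator_apply, hp]
    rw [h0, mul_zero]
    have : ∀ m : ℕ, f p.1 * φ m p.2 = 0 := by
      intro m
      rw [hφvanish m p.2 (not_lt.1 hp), mul_zero]
    simpa [this] using tendsto_const_nhds
end Blocks

theorem block_measurable' {Ω : Type*} (G' : ℝ≥0∞ → MeasurableSpace Ω) (hmono : Monotone G')
    (u : ℝ≥0∞) (f : Ω → ℝ) (hf : @Measurable Ω ℝ (G' u) _ f) :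
    @Measurable (Ω × ℝ≥0∞) ℝ (predictableSigmaAlgebra G') _
      (fun p => if u < p.2 then f p.1 else 0) := by
  have := block_measurable G' hmono u f hf
  convert this using 2 with p
  by_cases hp : u < p.2 <;> simp [Set.indicator_apply, hp]

theorem time_set_measurable {Ω : Type*} (G' : ℝ≥0∞ → MeasurableSpace Ω) (hmono : Monotone G')
    (u : ℝ≥0∞) :
    MeasurableSet[predictableSigmaAlgebra G'] {p : Ω × ℝ≥0∞ | u < p.2} := by
  have h := block_measurable' G' hmono u (fun _ => (1 : ℝ)) measurable_const
  have hset : {p : Ω × ℝ≥0∞ | u < p.2} =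
      (fun p : Ω × ℝ≥0∞ => if u < p.2 then (1 : ℝ) else 0) ⁻¹' {1} := by
    ext p
    by_cases hp : u < p.2 <;> simp [hp]
  rw [hset]
  exact h (measurableSet_singleton 1)

theorem zero_set_measurable {Ω : Type*} (G' : ℝ≥0∞ → MeasurableSpace Ω) (hmono : Monotone G') :
    MeasurableSet[predictableSigmaAlgebra G'] {p : Ω × ℝ≥0∞ | p.2 = 0} := by
  have h := (time_set_measurable G' hmono 0).compl
  convert h using 1
  ext p
  simp [pos_iff_ne_zero]

theorem const_block_measurable {Ω : Type*} (G' : ℝ≥0∞ → MeasurableSpace Ω) (hmono : Monotone G')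
    (f : Ω → ℝ) (hf : @Measurable Ω ℝ (G' 0) _ f) :
    @Measurable (Ω × ℝ≥0∞) ℝ (predictableSigmaAlgebra G') _ (fun p => f p.1) :=
  measurable_eval_pred G' (fun _ ω => f ω)
    (fun t => hf.mono (hmono (zero_le (a := t))) le_rfl) (fun _ => continuous_const)

/-- If `ξ = (ξ_t)_{t ∈ [0,∞]}` is predictable with respect to a filtration
`(G_t)`, then the left-limsup process `ξ̄` given by `ξ̄_0 = ξ_0` and
`ξ̄_t = limsup_{s ↑↑ t} ξ_s` for `t > 0` is predictable with respect to the
universally completed filtration `(G^U_t)`. -/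
theorem leftLimsup_predictable {Ω : Type*} {m : MeasurableSpace Ω}
    (G : ℝ≥0∞ → MeasurableSpace Ω) (hG_le : ∀ t, G t ≤ m) (hG_mono : Monotone G)
    (ξ : ℝ≥0∞ → Ω → ℝ)
    (hξ : @Measurable (Ω × ℝ≥0∞) ℝ (predictableSigmaAlgebra G) _
      (fun p => ξ p.2 p.1)) :
    @Measurable (Ω × ℝ≥0∞) ℝ
      (predictableSigmaAlgebra fun t => univCompletion (G t)) _
      (fun p =>
        if p.2 = 0 then ξ 0 p.1
        else Filter.limsup (fun s => ξ s p.1) (nhdsWithin p.2 (Set.Iio p.2))) := by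
  classical
  set GU : ℝ≥0∞ → MeasurableSpace Ω := fun t => univCompletion (G t) with hGUdef
  have hGUmono : Monotone GU := fun s t hst => univCompletion_mono (hG_mono hst)
  -- countable dense subset of times
  obtain ⟨D, hDcount, hDdense⟩ := TopologicalSpace.exists_countable_dense ℝ≥0∞
  obtain ⟨d, hd⟩ := hDcount.exists_eq_range hDdense.nonempty
  -- bounded transform
  set ζ : ℝ≥0∞ → Ω → ℝ≥0∞ := fun s ω => ENNReal.ofReal (Real.arctan (ξ s ω) + 2) with hζdef
  have hζ : @Measurable (Ω × ℝ≥0∞) ℝ≥0∞ (predictableSigmaAlgebra G) _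
      (fun p => ζ p.2 p.1) :=
    ENNReal.measurable_ofReal.comp ((Real.measurable_arctan.comp hξ).add_const 2)
  set c1 : ℝ≥0∞ := ENNReal.ofReal (2 - Real.pi / 2) with hc1def
  set c2 : ℝ≥0∞ := ENNReal.ofReal (Real.pi / 2 + 2) with hc2def
  have hpi : Real.pi / 2 < 2 := by have := Real.pi_lt_four; linarith
  have hpi0 : 0 < Real.pi / 2 := by have := Real.pi_pos; linarith
  have hc2top : c2 ≠ ⊤ := ENNReal.ofReal_ne_top
  set h : ℝ → ℝ≥0∞ := fun a => ENNReal.ofReal (Real.arctan a + 2) with hhdef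
  have harc : ∀ a : ℝ, -(Real.pi / 2) < Real.arctan a ∧ Real.arctan a < Real.pi / 2 :=
    fun a => ⟨Real.neg_pi_div_two_lt_arctan a, Real.arctan_lt_pi_div_two a⟩
  have hhmono : StrictMono h := by
    intro a b hab
    have hb := harc b
    exact (ENNReal.ofReal_lt_ofReal_iff (by linarith [hb.1])).2
      (by have := Real.arctan_strictMono hab; linarith)
  have hh1 : ∀ a, c1 < h a := by
    intro a
    have := (harc a).1
    exact (ENNReal.ofReal_lt_ofReal_iff (by linarith)).2 (by linarith)
  have hh2 : ∀ a, h a < c2 := by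
    intro a
    have := (harc a).2
    exact (ENNReal.ofReal_lt_ofReal_iff (by linarith)).2 (by linarith)
  have hc1c2 : c1 ≤ c2 := ENNReal.ofReal_le_ofReal (by linarith)
  have hζh : ∀ s ω, ζ s ω = h (ξ s ω) := fun s ω => rfl
  -- interval sups
  set Sf : ℕ → ℕ → Ω → ℝ≥0∞ := fun i j ω => ⨆ s ∈ Set.Ioc (d i) (d j), ζ s ω with hSfdef
  have hSf : ∀ i j, @Measurable Ω ℝ≥0∞ (GU (d j)) _ (Sf i j) :=
    fun i j => sup_univ_measurable G hG_mono ζ hζ (d i) (d j)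
  have hSfle : ∀ i j ω, Sf i j ω ≤ c2 := fun i j ω =>
    iSup_le fun s => iSup_le fun _ => (hh2 (ξ s ω)).le
  have hSftop : ∀ i j ω, Sf i j ω ≠ ⊤ := fun i j ω => ne_top_of_le_ne_top hc2top (hSfle i j ω)
  -- window processes
  set K : ℕ → ℕ → Ω × ℝ≥0∞ → ℝ≥0∞ := fun i j p =>
    if d i < d j ∧ d j < p.2 then Sf i j p.1 else 0 with hKdef
  have hK : ∀ i j, @Measurable (Ω × ℝ≥0∞) ℝ≥0∞ (predictableSigmaAlgebra GU) _ (K i j) := by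
    intro i j
    by_cases hij : d i < d j
    · have hreal : @Measurable (Ω × ℝ≥0∞) ℝ (predictableSigmaAlgebra GU) _
          (fun p => if d j < p.2 then (Sf i j p.1).toReal else 0) :=
        block_measurable' GU hGUmono (d j) _ (ENNReal.measurable_toReal.comp (hSf i j))
      have heqK : K i j =
          fun p => ENNReal.ofReal (if d j < p.2 then (Sf i j p.1).toReal else 0) := by
        funext p
        simp only [hKdef]
        by_cases h2 : d j < p.2
        · simp [hij, h2, ENNReal.ofReal_toReal (hSftop i j p.1)]
        · simp [hij, h2]
      rw [heqK]
      exact ENNReal.measurable_ofReal.comp hreal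
    · have heqK : K i j = fun _ => 0 := by
        funext p; simp [hKdef, hij]
      rw [heqK]
      exact measurable_const
  set J : ℕ → Ω × ℝ≥0∞ → ℝ≥0∞ := fun i p => if d i < p.2 then ⨆ j, K i j p else c2 with hJdef
  have hJ : ∀ i, @Measurable (Ω × ℝ≥0∞) ℝ≥0∞ (predictableSigmaAlgebra GU) _ (J i) := by
    intro i
    letI : MeasurableSpace (Ω × ℝ≥0∞) := predictableSigmaAlgebra GU
    exact Measurable.ite (time_set_measurable GU hGUmono (d i))
      (Measurable.iSup fun j => hK i j) measurable_const
  set M : Ω × ℝ≥0∞ → ℝ≥0∞ := fun p => ⨅ i, J i p with hMdef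
  have hM : @Measurable (Ω × ℝ≥0∞) ℝ≥0∞ (predictableSigmaAlgebra GU) _ M := by
    letI : MeasurableSpace (Ω × ℝ≥0∞) := predictableSigmaAlgebra GU
    exact Measurable.iInf hJ
  -- the Borel read-out function
  set β : ℝ≥0∞ → ℝ := fun y => if c1 < y ∧ y < c2 then Real.tan (y.toReal - 2) else 0 with hβdef
  have hβ : Measurable β := by
    refine Measurable.ite ?_ ?_ measurable_const
    · have : {y : ℝ≥0∞ | c1 < y ∧ y < c2} = Set.Ioo c1 c2 := rfl
      rw [this]
      exact measurableSet_Ioo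
    · have htan : Measurable Real.tan := by
        have : Real.tan = fun x => Real.sin x / Real.cos x := by
          funext x; exact Real.tan_eq_sin_div_cos x
        rw [this]
        exact Real.measurable_sin.div Real.measurable_cos
      exact htan.comp (ENNReal.measurable_toReal.sub_const 2)
  -- the time-zero section
  have hf0 : @Measurable Ω ℝ (G 0) _ (fun ω => ξ 0 ω) := by
    intro B hB
    have h1 : MeasurableSet[(G 0).prod inferInstance]
        ({p : Ω × ℝ≥0∞ | ξ p.2 p.1 ∈ B} ∩ (Set.univ ×ˢ Set.Iic 0)) :=
      pred_restrict G hG_mono 0 (hξ hB)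
    letI : MeasurableSpace Ω := G 0
    have h2 : Measurable (fun ω : Ω => (ω, (0 : ℝ≥0∞))) := measurable_prodMk_right
    have h3 : (fun ω : Ω => ξ 0 ω) ⁻¹' B =
        (fun ω : Ω => (ω, (0 : ℝ≥0∞))) ⁻¹'
          ({p : Ω × ℝ≥0∞ | ξ p.2 p.1 ∈ B} ∩ (Set.univ ×ˢ Set.Iic 0)) := by
      ext ω
      simp
    rw [h3]
    exact h2 h1
  -- the measurable candidate
  have hfinal : @Measurable (Ω × ℝ≥0∞) ℝ (predictableSigmaAlgebra GU) _
      (fun p => if p.2 = 0 then ξ 0 p.1 else β (M p)) := by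
    letI : MeasurableSpace (Ω × ℝ≥0∞) := predictableSigmaAlgebra GU
    refine Measurable.ite (zero_set_measurable GU hGUmono) ?_ (hβ.comp hM)
    exact const_block_measurable GU hGUmono _
      (hf0.mono (le_univCompletion (G 0)) le_rfl)
  -- pointwise identification
  have hmain : ∀ p : Ω × ℝ≥0∞, p.2 ≠ 0 →
      Filter.limsup (fun s => ξ s p.1) (nhdsWithin p.2 (Set.Iio p.2)) = β (M p) := by
    rintro ⟨ω, t⟩ hp
    simp only at hp ⊢
    have ht : (0 : ℝ≥0∞) < t := pos_iff_ne_zero.2 hp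
    have hbasis := nhdsLT_basis_of_exists_lt (α := ℝ≥0∞) ⟨0, ht⟩
    have hE : ∀ a : ℝ, (∀ᶠ s in nhdsWithin t (Set.Iio t), ξ s ω ≤ a) ↔
        ∃ u, u < t ∧ ∀ s ∈ Set.Ioo u t, ξ s ω ≤ a := by
      intro a
      rw [hbasis.eventually_iff]
    -- J-values
    have hJval : ∀ i, d i < t → J i (ω, t) = ⨆ s ∈ Set.Ioo (d i) t, ζ s ω := by
      intro i hi
      have hJi : J i (ω, t) = ⨆ j, K i j (ω, t) := by
        simp only [hJdef]
        rw [if_pos hi]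
      rw [hJi]
      apply le_antisymm
      · refine iSup_le fun j => ?_
        simp only [hKdef]
        split_ifs with hcond
        · refine iSup_le fun s => iSup_le fun hs => ?_
          exact le_biSup (fun s => ζ s ω) (⟨hs.1, lt_of_le_of_lt hs.2 hcond.2⟩ : s ∈ Set.Ioo (d i) t)
        · exact zero_le
      · refine iSup_le fun s => iSup_le fun hs => ?_
        obtain ⟨x, hxD, hx⟩ := hDdense.exists_mem_open isOpen_Ioo (Set.nonempty_Ioo.2 hs.2)
        rw [hd] at hxD
        obtain ⟨j, rfl⟩ := hxD
        have hcond : d i < d j ∧ d j < t := ⟨lt_trans hs.1 hx.1, hx.2⟩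
        calc ζ s ω ≤ Sf i j ω := le_biSup (fun s => ζ s ω) (⟨hs.1, hx.1.le⟩ : s ∈ Set.Ioc (d i) (d j))
        _ = K i j (ω, t) := by simp only [hKdef]; rw [if_pos hcond]
        _ ≤ ⨆ j, K i j (ω, t) := le_iSup (fun j => K i j (ω, t)) j
    obtain ⟨x0, hx0D, hx0⟩ := hDdense.exists_mem_open isOpen_Ioo (Set.nonempty_Ioo.2 ht)
    rw [hd] at hx0D
    obtain ⟨i₀, rfl⟩ := hx0D
    have hi₀ : d i₀ < t := hx0.2
    -- key facts
    have hF1 : ∀ a : ℝ, (∀ᶠ s in nhdsWithin t (Set.Iio t), ξ s ω ≤ a) → M (ω, t) ≤ h a := by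
      intro a ha
      obtain ⟨u, hu, hall⟩ := (hE a).1 ha
      obtain ⟨x, hxD, hx⟩ := hDdense.exists_mem_open isOpen_Ioo (Set.nonempty_Ioo.2 hu)
      rw [hd] at hxD
      obtain ⟨j, rfl⟩ := hxD
      refine le_trans (iInf_le _ j) ?_
      rw [hJval j hx.2]
      refine iSup_le fun s => iSup_le fun hs => ?_
      rw [hζh]
      exact hhmono.monotone (hall s ⟨lt_trans hx.1 hs.1, hs.2⟩)
    have hF2 : ∀ a : ℝ, M (ω, t) < h a → (∀ᶠ s in nhdsWithin t (Set.Iio t), ξ s ω ≤ a) := by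
      intro a hMa
      obtain ⟨i, hi⟩ := iInf_lt_iff.1 hMa
      have hit : d i < t := by
        by_contra hit
        have : J i (ω, t) = c2 := by
          simp only [hJdef]
          rw [if_neg hit]
        rw [this] at hi
        exact absurd (lt_trans hi (hh2 a)) (lt_irrefl _)
      rw [hJval i hit] at hi
      refine (hE a).2 ⟨d i, hit, fun s hs => ?_⟩
      have hζs : ζ s ω < h a := lt_of_le_of_lt (le_biSup (fun s => ζ s ω) hs) hi
      rw [hζh] at hζs
      exact (hhmono.lt_iff_lt.1 hζs).le
    have hMc1 : c1 ≤ M (ω, t) := by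
      refine le_iInf fun i => ?_
      by_cases hi : d i < t
      · rw [hJval i hi]
        obtain ⟨s0, hs0⟩ := Set.nonempty_Ioo.2 hi
        exact le_trans (hh1 (ξ s0 ω)).le (le_biSup (fun s => ζ s ω) hs0)
      · simp only [hJdef]
        rw [if_neg hi]
        exact hc1c2
    have hMc2 : M (ω, t) ≤ c2 := by
      refine le_trans (iInf_le _ i₀) ?_
      rw [hJval i₀ hi₀]
      exact iSup_le fun s => iSup_le fun _ => (hh2 (ξ s ω)).le
    have hMtop : M (ω, t) ≠ ⊤ := ne_top_of_le_ne_top hc2top hMc2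
    rw [Filter.limsup_eq]
    rcases eq_or_lt_of_le hMc1 with hM1 | hM1
    · -- M = c1 : every a is an eventual bound
      have hEuniv : {a : ℝ | ∀ᶠ s in nhdsWithin t (Set.Iio t), ξ s ω ≤ a} = Set.univ :=
        Set.eq_univ_of_forall fun a => hF2 a (hM1 ▸ hh1 a)
      rw [hEuniv]
      have hβ0 : β (M (ω, t)) = 0 := by
        simp only [hβdef]
        rw [if_neg]
        rw [← hM1]
        simp
      rw [hβ0]
      refine Real.sInf_of_not_bddBelow ?_
      rintro ⟨b, hb⟩
      have := hb (Set.mem_univ (b - 1))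
      linarith
    rcases eq_or_lt_of_le hMc2 with hM2 | hM2
    · -- M = c2 : no eventual bound
      have hEempty : {a : ℝ | ∀ᶠ s in nhdsWithin t (Set.Iio t), ξ s ω ≤ a} = ∅ := by
        refine Set.eq_empty_iff_forall_notMem.2 fun a ha => ?_
        have h1 := hF1 a ha
        rw [hM2] at h1
        exact absurd (lt_of_le_of_lt h1 (hh2 a)) (lt_irrefl _)
      rw [hEempty, Real.sInf_empty]
      simp only [hβdef]
      rw [if_neg]
      rw [hM2]
      simp
    · -- middle case
      set y : ℝ := (M (ω, t)).toReal with hydef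
      have hy1 : 2 - Real.pi / 2 < y := by
        rw [hydef]
        exact (ENNReal.ofReal_lt_iff_lt_toReal (by linarith) hMtop).1 hM1
      have hy2 : y < Real.pi / 2 + 2 := by
        rw [hydef]
        exact (ENNReal.lt_ofReal_iff_toReal_lt hMtop).1 hM2
      set b : ℝ := Real.tan (y - 2) with hbdef
      have hhb : h b = M (ω, t) := by
        simp only [hhdef, hbdef]
        rw [Real.arctan_tan (by linarith) (by linarith)]
        rw [show y - 2 + 2 = y by ring]
        rw [hydef]
        exact ENNReal.ofReal_toReal hMtop
      have hlb : ∀ a ∈ {a : ℝ | ∀ᶠ s in nhdsWithin t (Set.Iio t), ξ s ω ≤ a}, b ≤ a := by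
        intro a ha
        have h1 := hF1 a ha
        rw [← hhb] at h1
        exact (hhmono.le_iff_le).1 h1
      have hne : (b + 1) ∈ {a : ℝ | ∀ᶠ s in nhdsWithin t (Set.Iio t), ξ s ω ≤ a} := by
        refine hF2 (b + 1) ?_
        rw [← hhb]
        exact hhmono (lt_add_one b)
      have hsInf : sInf {a : ℝ | ∀ᶠ s in nhdsWithin t (Set.Iio t), ξ s ω ≤ a} = b := by
        apply le_antisymm
        · by_contra hcon
          push_neg at hcon
          set ε : ℝ := (sInf {a : ℝ | ∀ᶠ s in nhdsWithin t (Set.Iio t), ξ s ω ≤ a} - b) / 2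
            with hεdef
          have hε : 0 < ε := by rw [hεdef]; linarith
          have hmem : (b + ε) ∈ {a : ℝ | ∀ᶠ s in nhdsWithin t (Set.Iio t), ξ s ω ≤ a} := by
            refine hF2 (b + ε) ?_
            rw [← hhb]
            exact hhmono (by linarith)
          have := csInf_le ⟨b, hlb⟩ hmem
          rw [hεdef] at this
          linarith
        · exact le_csInf ⟨b + 1, hne⟩ hlb
      rw [hsInf]
      simp only [hβdef]
      rw [if_pos ⟨hM1, hM2⟩]
  have heq : (fun p : Ω × ℝ≥0∞ =>
      if p.2 = 0 then ξ 0 p.1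
      else Filter.limsup (fun s => ξ s p.1) (nhdsWithin p.2 (Set.Iio p.2))) =
      fun p => if p.2 = 0 then ξ 0 p.1 else β (M p) := by
    funext p
    by_cases hp : p.2 = 0
    · simp [hp]
    · simp only [hp, if_false]
      exact hmain p hp
  rw [heq]
  exact hfinal
end
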